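/- arXiv:2101.03148 — 7 statements merged into one kernel-verified Lean document; each statement's English description precedes it below -/
import Mathlib

section
/- Let Γ be a finite simple graph with vertex set {1,…,d} and edge set E, with bond dimensions m_e ≥ 1 and local dimensions n_v ≥ 1. Fix a vertex v of degree k with incident edges e_1,…,e_k ordered so that m_{e_1} ≤ ⋯ ≤ m_{e_k}, and suppose the bond dimension is overabundant at v: m_{e_k} > n_v · m_{e_1}⋯m_{e_{k−1}}. Define new bond dimensions m̄ by m̄_{e_k} = n_v · m_{e_1}⋯m_{e_{k−1}} and m̄_e = m_e for all other edges. Then TNS°(Γ,m,n) = TNS°(Γ,m̄,n); in particular the corresponding tensor network varieties (Zariski closures) coincide. -/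
open scoped BigOperators

/-- A finite simple graph on vertex set `Fin d`, with edge type `E`: each edge has an
ordered pair of endpoints, there are no loops, and distinct edges have distinct
(unordered) endpoint pairs. -/
structure GraphData (d : ℕ) (E : Type) where
  ends : E → Fin d × Fin d
  no_loops : ∀ e, (ends e).1 ≠ (ends e).2
  simple : Function.Injective fun e => ({(ends e).1, (ends e).2} : Finset (Fin d))

/-- Incidence: `v` is an endpoint of `e`. -/
def GraphData.Inc {d : ℕ} {E : Type} (G : GraphData d E) (v : Fin d) (e : E) : Prop :=
  v = (G.ends e).1 ∨ v = (G.ends e).2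

instance {d : ℕ} {E : Type} (G : GraphData d E) (v : Fin d) : DecidablePred (G.Inc v) :=
  fun _ => inferInstanceAs (Decidable (_ ∨ _))

/-- The set `TNS°(Γ,m,n)` of tensor network states, in coordinates:
`T(i) = ∑_{j : ∀ e, Fin (m e)} ∏_v X_v(i_v, j|_{δ(v)})`. -/
def TNS {d : ℕ} {E : Type} [Fintype E] [DecidableEq E] (G : GraphData d E)
    (m : E → ℕ) (n : Fin d → ℕ) : Set ((∀ v : Fin d, Fin (n v)) → ℂ) :=
  { T | ∃ X : ∀ v : Fin d, Fin (n v) → ((∀ e : {e : E // G.Inc v e}, Fin (m e.1)) → ℂ),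
      ∀ i, T i = ∑ j : (∀ e : E, Fin (m e)), ∏ v : Fin d, X v (i v) fun e => j e.1 }

/-- Dimension of a subset of a complex coordinate space: the Krull dimension of the
coordinate ring of its Zariski closure. -/
noncomputable def sdim {ι : Type} (S : Set (ι → ℂ)) : WithBot (WithTop ℕ) :=
  ringKrullDim (MvPolynomial ι ℂ ⧸ MvPolynomial.vanishingIdeal ℂ S)


theorem TNS_mono {d : ℕ} {E : Type} [Fintype E] [DecidableEq E] (G : GraphData d E)
    (m m' : E → ℕ) (n : Fin d → ℕ) (hle : ∀ e, m' e ≤ m e) :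
    TNS G m' n ⊆ TNS G m n := by
  rintro T ⟨X, hX⟩
  classical
  refine ⟨fun v i j => if h : ∀ e : {e : E // G.Inc v e}, (j e).val < m' e.1 then
      X v i (fun e => ⟨(j e).val, h e⟩) else 0, fun i => ?_⟩
  rw [hX]
  have hinj : Function.Injective (fun (j : ∀ e, Fin (m' e)) (e : E) =>
      Fin.castLE (hle e) (j e)) := by
    intro a b hab
    funext e
    have := congrFun hab e
    exact Fin.ext (by simpa [Fin.ext_iff] using this)
  rw [← Finset.sum_subset (Finset.subset_univ
    (Finset.univ.map ⟨_, hinj⟩ : Finset (∀ e, Fin (m e))))]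
  · rw [Finset.sum_map]
    refine Finset.sum_congr rfl fun j _ => Finset.prod_congr rfl fun v _ => ?_
    have h : ∀ e : {e : E // G.Inc v e},
        ((Fin.castLE (hle e.1) (j e.1) : Fin (m e.1))).val < m' e.1 := fun e => (j e.1).isLt
    simp only [Function.Embedding.coeFn_mk]
    rw [dif_pos h]
    congr 1
  · intro j _ hj
    have : ¬ ∀ e, (j e).val < m' e := by
      intro hall
      exact hj (Finset.mem_map.2 ⟨fun e => ⟨(j e).val, hall e⟩, Finset.mem_univ _,
        funext fun e => Fin.ext rfl⟩)
    push_neg at this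
    obtain ⟨e, he⟩ := this
    refine Finset.prod_eq_zero (Finset.mem_univ (G.ends e).1) ?_
    beta_reduce
    rw [dif_neg]
    intro hall
    exact absurd (hall ⟨e, Or.inl rfl⟩) (by simpa using he)

lemma val_congr {E : Type} {m : E → ℕ} (f : ∀ e, Fin (m e)) {a b : E} (h : a = b) :
    ((f a : Fin (m a)) : ℕ) = ((f b : Fin (m b)) : ℕ) := by subst h; rfl

theorem TNS_contract {d : ℕ} {E : Type} [Fintype E] [DecidableEq E] (G : GraphData d E)
    (m : E → ℕ) (n : Fin d → ℕ) (hm : ∀ e, 1 ≤ m e)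
    (v₀ : Fin d) (e₀ : E) (he₀ : G.Inc v₀ e₀) :
    TNS G m n ⊆ TNS G (Function.update m e₀
      (n v₀ * ∏ e : {e : E // G.Inc v₀ e ∧ e ≠ e₀}, m e.1)) n := by
  classical
  set N := n v₀ * ∏ e : {e : E // G.Inc v₀ e ∧ e ≠ e₀}, m e.1 with hN
  set m' := Function.update m e₀ N with hm'
  have hupd : m' e₀ = N := Function.update_self e₀ N m
  have hne : ∀ e : E, e ≠ e₀ → m' e = m e := fun e h => Function.update_of_ne h N m
  -- the other endpoint of e₀
  set w₀ : Fin d := if v₀ = (G.ends e₀).1 then (G.ends e₀).2 else (G.ends e₀).1 with hw₀def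
  have hw₀ : G.Inc w₀ e₀ := by
    rw [hw₀def]; split
    · exact Or.inr rfl
    · exact Or.inl rfl
  have hwv : w₀ ≠ v₀ := by
    rw [hw₀def]; split
    · rename_i h; rw [h]; exact fun hh => G.no_loops e₀ hh.symm
    · rename_i h
      rcases he₀ with h1 | h2
      · exact absurd h1 h
      · rw [h2]; exact fun hh => G.no_loops e₀ hh
  have hIncE : ∀ v : Fin d, G.Inc v e₀ → v = v₀ ∨ v = w₀ := by
    intro v hv
    rw [hw₀def]
    rcases he₀ with h1 | h1 <;> rcases hv with h2 | h2 <;>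
      simp_all [GraphData.Inc] <;> tauto
  -- the reindexing equivalence
  have hcard : Fintype.card (Fin (n v₀) × ∀ e : {e : E // G.Inc v₀ e ∧ e ≠ e₀}, Fin (m e.1))
      = N := by
    simp [hN, Fintype.card_pi]
  set κ : (Fin (n v₀) × ∀ e : {e : E // G.Inc v₀ e ∧ e ≠ e₀}, Fin (m e.1)) ≃ Fin N :=
    Fintype.equivFinOfCardEq hcard with hκ
  rintro T ⟨X, hX⟩
  set Y : ∀ v : Fin d, Fin (n v) → ((∀ e : {e : E // G.Inc v e}, Fin (m' e.1)) → ℂ) :=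
    Function.update (Function.update
      (fun v i (j' : ∀ e : {e : E // G.Inc v e}, Fin (m' e.1)) =>
        X v i fun e => if h : e.1 = e₀ then ⟨0, hm e.1⟩
          else Fin.cast (hne e.1 h) (j' e))
      v₀ (fun i (j' : ∀ e : {e : E // G.Inc v₀ e}, Fin (m' e.1)) =>
        if κ.symm (Fin.cast hupd (j' ⟨e₀, he₀⟩)) =
            (i, fun e : {e : E // G.Inc v₀ e ∧ e ≠ e₀} =>
              Fin.cast (hne e.1 e.2.2) (j' ⟨e.1, e.2.1⟩)) then 1 else 0))
      w₀ (fun i (j' : ∀ e : {e : E // G.Inc w₀ e}, Fin (m' e.1)) => ∑ j₀ : Fin (m e₀),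
        X v₀ (κ.symm (Fin.cast hupd (j' ⟨e₀, hw₀⟩))).1
          (fun e => if h : e.1 = e₀ then Fin.cast (congrArg m h.symm) j₀
            else (κ.symm (Fin.cast hupd (j' ⟨e₀, hw₀⟩))).2 ⟨e.1, e.2, h⟩) *
        X w₀ i (fun e => if h : e.1 = e₀ then Fin.cast (congrArg m h.symm) j₀
            else Fin.cast (hne e.1 h) (j' e))) with hY
  refine ⟨Y, fun i => ?_⟩
  rw [hX i]
  -- reindex both sums
  set σ : (∀ e : E, Fin (m e)) ≃ (Fin (m e₀) × ∀ e : {e : E // e ≠ e₀}, Fin (m e.1)) :=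
    Equiv.piSplitAt e₀ (fun e => Fin (m e)) with hσ
  set τ : (Fin N × ∀ e : {e : E // e ≠ e₀}, Fin (m e.1))
      ≃ (Fin (m' e₀) × ∀ e : {e : E // e ≠ e₀}, Fin (m' e.1)) :=
    (finCongr hupd.symm).prodCongr (Equiv.piCongrRight fun e => finCongr (hne e.1 e.2).symm)
    with hτ
  set ε' : (Fin N × ∀ e : {e : E // e ≠ e₀}, Fin (m e.1)) ≃ (∀ e : E, Fin (m' e)) :=
    τ.trans (Equiv.piSplitAt e₀ (fun e => Fin (m' e))).symm with hε'
  rw [← Equiv.sum_comp σ.symm, ← Equiv.sum_comp ε', Fintype.sum_prod_type_right,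
    Fintype.sum_prod_type_right]
  refine Finset.sum_congr rfl fun jr _ => ?_
  -- component facts
  have hJ : ∀ (j₀ : Fin (m e₀)) (e : E) (h : e ≠ e₀),
      ((σ.symm (j₀, jr) e : Fin (m e)) : ℕ) = (jr ⟨e, h⟩ : ℕ) := by
    intro j₀ e h
    simp [hσ, Equiv.piSplitAt_symm_apply, dif_neg h]
  have hJ0 : ∀ j₀ : Fin (m e₀), ((σ.symm (j₀, jr) e₀ : Fin (m e₀)) : ℕ) = (j₀ : ℕ) := by
    intro j₀
    simp [hσ, Equiv.piSplitAt_symm_apply]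
  have hK : ∀ (k : Fin N) (e : E) (h : e ≠ e₀),
      ((ε' (k, jr) e : Fin (m' e)) : ℕ) = (jr ⟨e, h⟩ : ℕ) := by
    intro k e h
    simp [hε', hτ, Equiv.piSplitAt_symm_apply, dif_neg h]
  have hK0 : ∀ k : Fin N, ((ε' (k, jr) e₀ : Fin (m' e₀)) : ℕ) = (k : ℕ) := by
    intro k
    simp [hε', hτ, Equiv.piSplitAt_symm_apply]
  set A : Fin (m e₀) → ℂ := fun j₀ => X v₀ (i v₀) fun e =>
      if h : e.1 = e₀ then Fin.cast (congrArg m h.symm) j₀ else jr ⟨e.1, h⟩ with hA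
  set B : Fin (m e₀) → ℂ := fun j₀ => X w₀ (i w₀) fun e =>
      if h : e.1 = e₀ then Fin.cast (congrArg m h.symm) j₀ else jr ⟨e.1, h⟩ with hB
  set C : ℂ := ∏ v ∈ (Finset.univ.erase v₀).erase w₀, X v (i v) (fun e =>
      if h : e.1 = e₀ then ⟨0, hm e.1⟩ else jr ⟨e.1, h⟩) with hC
  have hincne : ∀ v : Fin d, v ≠ v₀ → v ≠ w₀ → ∀ e : {e : E // G.Inc v e}, e.1 ≠ e₀ := by
    intro v hv1 hv2 e he
    rcases hIncE v (he ▸ e.2) with h | h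
    · exact hv1 h
    · exact hv2 h
  -- left-hand side terms
  have hL : ∀ j₀ : Fin (m e₀),
      (∏ v : Fin d, X v (i v) fun e => σ.symm (j₀, jr) e.1) = A j₀ * (B j₀ * C) := by
    intro j₀
    rw [← Finset.mul_prod_erase Finset.univ _ (Finset.mem_univ v₀),
        ← Finset.mul_prod_erase _ _ (Finset.mem_erase.2 ⟨hwv, Finset.mem_univ w₀⟩)]
    congr 1
    · refine congrArg _ (funext fun e => Fin.ext ?_)
      by_cases h : e.1 = e₀
      · rw [dif_pos h, Fin.coe_cast]
        exact (val_congr _ h).trans (hJ0 j₀)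
      · rw [dif_neg h]
        exact hJ j₀ e.1 h
    congr 1
    · refine congrArg _ (funext fun e => Fin.ext ?_)
      by_cases h : e.1 = e₀
      · rw [dif_pos h, Fin.coe_cast]
        exact (val_congr _ h).trans (hJ0 j₀)
      · rw [dif_neg h]
        exact hJ j₀ e.1 h
    · refine Finset.prod_congr rfl fun v hv => ?_
      rw [Finset.mem_erase, Finset.mem_erase] at hv
      refine congrArg _ (funext fun e => Fin.ext ?_)
      have h : e.1 ≠ e₀ := hincne v hv.2.1 hv.1 e
      rw [dif_neg h]
      exact hJ j₀ e.1 h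
  -- right-hand side terms
  have hkk : ∀ k : Fin N, Fin.cast hupd (ε' (k, jr) e₀) = k := fun k =>
    Fin.ext (by rw [Fin.coe_cast]; exact hK0 k)
  have hsec : ∀ k : Fin N,
      (fun e : {e : E // G.Inc v₀ e ∧ e ≠ e₀} => Fin.cast (hne e.1 e.2.2) (ε' (k, jr) e.1))
        = fun e : {e : E // G.Inc v₀ e ∧ e ≠ e₀} => jr ⟨e.1, e.2.2⟩ := fun k =>
    funext fun e => Fin.ext (by rw [Fin.coe_cast]; exact hK k e.1 e.2.2)
  have hkey : ∀ k : Fin N, (∏ v : Fin d, Y v (i v) fun e => ε' (k, jr) e.1)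
      = if κ.symm k = (i v₀, fun e : {e : E // G.Inc v₀ e ∧ e ≠ e₀} => jr ⟨e.1, e.2.2⟩)
        then (∑ j₀ : Fin (m e₀), A j₀ * B j₀) * C else 0 := by
    intro k
    have hYv₀ : Y v₀ (i v₀) (fun e : {e : E // G.Inc v₀ e} => ε' (k, jr) e.1)
        = if κ.symm k = (i v₀, fun e : {e : E // G.Inc v₀ e ∧ e ≠ e₀} => jr ⟨e.1, e.2.2⟩) then 1 else 0 := by
      rw [hY, Function.update_of_ne (Ne.symm hwv), Function.update_self]
      show (if κ.symm (Fin.cast hupd (ε' (k, jr) e₀)) =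
          (i v₀, fun e : {e : E // G.Inc v₀ e ∧ e ≠ e₀} =>
            Fin.cast (hne e.1 e.2.2) (ε' (k, jr) e.1)) then (1:ℂ) else 0) = _
      rw [hkk k, hsec k]
    by_cases hk : κ.symm k = (i v₀, fun e : {e : E // G.Inc v₀ e ∧ e ≠ e₀} => jr ⟨e.1, e.2.2⟩)
    · rw [if_pos hk,
        ← Finset.mul_prod_erase Finset.univ _ (Finset.mem_univ v₀),
        ← Finset.mul_prod_erase _ _ (Finset.mem_erase.2 ⟨hwv, Finset.mem_univ w₀⟩),
        hYv₀, if_pos hk, one_mul]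
      congr 1
      · -- the w₀ factor
        rw [hY, Function.update_self]
        show (∑ j₀ : Fin (m e₀),
          X v₀ (κ.symm (Fin.cast hupd (ε' (k, jr) e₀))).1
            (fun e : {e : E // G.Inc v₀ e} => if h : e.1 = e₀ then Fin.cast (congrArg m h.symm) j₀
              else (κ.symm (Fin.cast hupd (ε' (k, jr) e₀))).2 ⟨e.1, e.2, h⟩) *
          X w₀ (i w₀) (fun e : {e : E // G.Inc w₀ e} => if h : e.1 = e₀ then Fin.cast (congrArg m h.symm) j₀
              else Fin.cast (hne e.1 h) (ε' (k, jr) e.1))) = _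
        rw [hkk k, hk]
        refine Finset.sum_congr rfl fun j₀ _ => ?_
        congr 1 <;>
        · refine congrArg _ (funext fun e => Fin.ext ?_)
          by_cases h : e.1 = e₀
          · rw [dif_pos h, dif_pos h]
          · simp only [dif_neg h]
            first
            | rfl
            | (rw [Fin.coe_cast]; exact hK k e.1 h)
      · -- the remaining factors
        refine Finset.prod_congr rfl fun v hv => ?_
        rw [Finset.mem_erase, Finset.mem_erase] at hv
        rw [hY, Function.update_of_ne hv.1, Function.update_of_ne hv.2.1]
        refine congrArg _ (funext fun e => Fin.ext ?_)
        by_cases h : e.1 = e₀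
        · rw [dif_pos h, dif_pos h]
        · rw [dif_neg h, dif_neg h, Fin.coe_cast]
          exact hK k e.1 h
    · rw [if_neg hk]
      refine Finset.prod_eq_zero (Finset.mem_univ v₀) ?_
      rw [hYv₀, if_neg hk]
  calc (∑ j₀ : Fin (m e₀), ∏ v : Fin d, X v (i v) fun e => σ.symm (j₀, jr) e.1)
      = ∑ j₀ : Fin (m e₀), A j₀ * (B j₀ * C) := Finset.sum_congr rfl fun j₀ _ => hL j₀
    _ = (∑ j₀ : Fin (m e₀), A j₀ * B j₀) * C := by
        rw [Finset.sum_mul]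
        exact Finset.sum_congr rfl fun j₀ _ => (mul_assoc _ _ _).symm
    _ = ∑ k : Fin N, ∏ v : Fin d, Y v (i v) fun e => ε' (k, jr) e.1 := by
        rw [Finset.sum_congr rfl fun k _ => hkey k]
        simp [Equiv.symm_apply_eq, Finset.sum_ite_eq']

/-- Lemma (reduction of overabundant bond dimension): if an edge `e₀` incident to `v₀`
satisfies `m_{e₀} > n_{v₀} · ∏_{e ∋ v₀, e ≠ e₀} m_e`, then replacing `m_{e₀}` by
`n_{v₀} · ∏_{e ∋ v₀, e ≠ e₀} m_e` does not change the set of tensor network states. -/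
theorem TNS_overabundant {d : ℕ} {E : Type} [Fintype E]
    [DecidableEq E] (G : GraphData d E) (m : E → ℕ) (n : Fin d → ℕ)
    (hm : ∀ e, 1 ≤ m e) (hn : ∀ v, 1 ≤ n v)
    (v₀ : Fin d) (e₀ : E) (he₀ : G.Inc v₀ e₀)
    (hover : n v₀ * (∏ e : {e : E // G.Inc v₀ e ∧ e ≠ e₀}, m e.1) < m e₀) :
    TNS G m n
      = TNS G (Function.update m e₀
          (n v₀ * ∏ e : {e : E // G.Inc v₀ e ∧ e ≠ e₀}, m e.1)) n := by
  refine Set.Subset.antisymm (TNS_contract G m n hm v₀ e₀ he₀) (TNS_mono G m _ n ?_)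
  intro e
  rcases eq_or_ne e e₀ with rfl | h
  · rw [Function.update_self]
    exact le_of_lt hover
  · rw [Function.update_of_ne h]
end

section
/- Let Γ be a finite simple graph with vertex set {1,…,d} and edge set E, with bond dimensions m_e ≥ 1, and let T = T(Γ,m) ∈ W_1⊗⋯⊗W_d be the graph tensor. For an edge e = {v,w} ∈ E (with a chosen ordering v,w of its endpoints) and a matrix Y ∈ M_{m_e}(ℂ), let g_e(Y) ∈ End(W_1)⊕⋯⊕End(W_d) be the tuple whose v-component acts as Y on the factor ℂ^{m_e} of W_v indexed by e and as the identity on the other factors, whose w-component acts as −Yᵀ on the factor ℂ^{m_e} of W_w indexed by e and as the identity on the other factors, and whose other components are 0. Then the annihilator of T under the Leibniz action equals the sum of the gauge Lie algebras and the traceless scalar tuples: ann(T) = ( Σ_{e∈E} { g_e(Y) : Y ∈ M_{m_e}(ℂ) } ) + { (x_1·Id_{W_1},…,x_d·Id_{W_d}) : x_1+⋯+x_d = 0 }. -/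
open scoped BigOperators

/-- The graph tensor `T(Γ,m)`, in coordinates with respect to the standard product bases
of the vertex spaces `W_v = ⨂_{e ∋ v} ℂ^{m_e}`. -/
noncomputable def graphTensor {d : ℕ} {E : Type} [Fintype E] [DecidableEq E]
    (G : GraphData d E) (m : E → ℕ) :
    (∀ v : Fin d, (∀ e : {e : E // G.Inc v e}, Fin (m e.1))) → ℂ :=
  fun β => ∑ j : (∀ e : E, Fin (m e)), ∏ v : Fin d,
    (if β v = (fun e : {e : E // G.Inc v e} => j e.1) then (1 : ℂ) else 0)

set_option linter.unusedSectionVars false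

namespace AnnGT

set_option linter.unusedSectionVars false

variable {d : ℕ} {E : Type} [Fintype E] [DecidableEq E] (G : GraphData d E)

lemma incL (e : E) : G.Inc (G.ends e).1 e := Or.inl rfl
lemma incR (e : E) : G.Inc (G.ends e).2 e := Or.inr rfl

lemma pair_eq {v w : Fin d} {e : E} (hv : G.Inc v e) (hw : G.Inc w e) (hvw : v ≠ w) :
    ({(G.ends e).1, (G.ends e).2} : Finset (Fin d)) = {v, w} := by
  rcases hv with hv | hv <;> rcases hw with hw | hw <;>
    first
      | (exact absurd (hv.trans hw.symm) hvw)
      | (subst hv; subst hw; rfl)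
      | (subst hv; subst hw; exact Finset.pair_comm _ _)

/-- Two distinct vertices are joined by at most one edge. -/
lemma edge_unique {v w : Fin d} {e e' : E} (hvw : v ≠ w)
    (h1 : G.Inc v e) (h2 : G.Inc w e) (h3 : G.Inc v e') (h4 : G.Inc w e') : e = e' := by
  apply G.simple
  simp only
  rw [pair_eq G h1 h2 hvw, pair_eq G h3 h4 hvw]

/-- The other endpoint of an edge. -/
def other (v : Fin d) (e : E) : Fin d :=
  if v = (G.ends e).1 then (G.ends e).2 else (G.ends e).1

lemma other_ne (v : Fin d) (e : E) : other G v e ≠ v := by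
  unfold other
  split
  · rename_i h; rw [h]; exact (G.no_loops e).symm
  · rename_i h; exact fun hc => h hc.symm

lemma inc_other {v : Fin d} {e : E} (h : G.Inc v e) : G.Inc (other G v e) e := by
  unfold other
  split
  · exact incR G e
  · exact incL G e

lemma other_eq {v w : Fin d} {e : E} (h : G.Inc v e) (hw : G.Inc w e) (hvw : w ≠ v) :
    other G v e = w := by
  unfold other
  rcases h with h | h
  · rw [if_pos h]
    rcases hw with hw | hw
    · exact absurd (hw.trans h.symm) hvw
    · exact hw.symm
  · rw [if_neg]
    · rcases hw with hw | hw
      · exact hw.symm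
      · exact absurd (hw.trans h.symm) hvw
    · intro hc
      exact G.no_loops e (hc.symm.trans h)

lemma other_fst (e : E) : other G (G.ends e).1 e = (G.ends e).2 :=
  other_eq G (incL G e) (incR G e) (G.no_loops e).symm

lemma other_snd (e : E) : other G (G.ends e).2 e = (G.ends e).1 :=
  other_eq G (incR G e) (incL G e) (G.no_loops e)

end AnnGT

namespace AnnGT

variable {d : ℕ} {E : Type} [Fintype E] [DecidableEq E] (G : GraphData d E) (m : E → ℕ)

/-- Index set for vertex `v`. -/
abbrev Idx (v : Fin d) := ∀ e : {e : E // G.Inc v e}, Fin (m e.1)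

/-- Full state. -/
abbrev St := ∀ v : Fin d, Idx G m v

/-- `β` is consistent at all edges. -/
def Cons (β : St G m) : Prop :=
  ∀ e : E, β (G.ends e).1 ⟨e, incL G e⟩ = β (G.ends e).2 ⟨e, incR G e⟩

/-- `β` is consistent at all edges not incident to `v`. -/
def ConsAway (β : St G m) (v : Fin d) : Prop :=
  ∀ e : E, ¬ G.Inc v e → β (G.ends e).1 ⟨e, incL G e⟩ = β (G.ends e).2 ⟨e, incR G e⟩

instance (β : St G m) : Decidable (Cons G m β) :=
  inferInstanceAs (Decidable (∀ _, _))

instance (β : St G m) (v : Fin d) : Decidable (ConsAway G m β v) :=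
  inferInstanceAs (Decidable (∀ _, _))

/-- The neighbor values seen from `v`. -/
def nbr (β : St G m) (v : Fin d) : Idx G m v :=
  fun e => β (other G v e.1) ⟨e.1, inc_other G e.2⟩


/-- Proof-irrelevant congruence for states. -/
lemma St.congr (β : St G m) {v w : Fin d} (h : v = w) (e : E)
    (hv : G.Inc v e) (hw : G.Inc w e) : β v ⟨e, hv⟩ = β w ⟨e, hw⟩ := by
  subst h; rfl

lemma upd_same (β : St G m) {v w : Fin d} (γ : Idx G m v) (h : w = v) (e : E)
    (hw : G.Inc w e) (hv : G.Inc v e) :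
    (Function.update β v γ) w ⟨e, hw⟩ = γ ⟨e, hv⟩ := by
  subst h; rw [Function.update_self]

lemma upd_other (β : St G m) {v w : Fin d} (γ : Idx G m v) (h : w ≠ v) (e : E)
    (hw : G.Inc w e) :
    (Function.update β v γ) w ⟨e, hw⟩ = β w ⟨e, hw⟩ := by
  rw [Function.update_of_ne h]

/-- The value of the graph tensor at a basis index. -/
lemma graphTensor_eq (β : St G m) :
    graphTensor G m β = if Cons G m β then 1 else 0 := by
  unfold graphTensor
  have h1 : ∀ j : (∀ e : E, Fin (m e)),
      (∏ v : Fin d, (if β v = (fun e : {e : E // G.Inc v e} => j e.1) then (1 : ℂ) else 0))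
      = if (∀ v : Fin d, β v = (fun e : {e : E // G.Inc v e} => j e.1)) then 1 else 0 := by
    intro j
    rw [Finset.prod_boole]
    simp
  simp only [h1]
  by_cases hc : Cons G m β
  · rw [if_pos hc]
    have h2 : ∀ j : (∀ e : E, Fin (m e)),
        (∀ v : Fin d, β v = (fun e : {e : E // G.Inc v e} => j e.1)) ↔
          j = (fun e => β (G.ends e).1 ⟨e, incL G e⟩) := by
      intro j
      constructor
      · intro h
        funext e
        rw [← congrFun (h (G.ends e).1) ⟨e, incL G e⟩]
      · rintro rfl v
        funext e
        obtain ⟨e, he⟩ := e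
        show β v ⟨e, he⟩ = β (G.ends e).1 ⟨e, incL G e⟩
        rcases he with h | h
        · exact St.congr G m β h e _ _
        · exact (St.congr G m β h e _ (incR G e)).trans (hc e).symm
    simp only [h2]
    rw [Finset.sum_ite_eq' Finset.univ]
    simp
  · rw [if_neg hc]
    rw [Cons] at hc
    push_neg at hc
    obtain ⟨e0, he0⟩ := hc
    apply Finset.sum_eq_zero
    intro j _
    rw [if_neg]
    intro h
    apply he0
    rw [congrFun (h (G.ends e0).1) ⟨e0, incL G e0⟩,
      congrFun (h (G.ends e0).2) ⟨e0, incR G e0⟩]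

lemma cons_update_iff (β : St G m) (v : Fin d) (γ : Idx G m v) :
    Cons G m (Function.update β v γ) ↔ (ConsAway G m β v ∧ γ = nbr G m β v) := by
  constructor
  · intro h
    constructor
    · intro e he
      have h' := h e
      rwa [upd_other G m β γ (fun hc => he (Or.inl hc.symm)) e,
        upd_other G m β γ (fun hc => he (Or.inr hc.symm)) e] at h'
    · funext e
      obtain ⟨e, he⟩ := e
      have h' := h e
      show γ ⟨e, he⟩ = β (other G v e) ⟨e, inc_other G he⟩
      rcases he with h1 | h1
      · have hne : (G.ends e).2 ≠ v := fun hc => G.no_loops e (hc.trans h1).symm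
        rw [upd_same G m β γ h1.symm e (incL G e) (h1 ▸ incL G e),
          upd_other G m β γ hne e] at h'
        exact h'.trans (St.congr G m β
          (other_eq G (show G.Inc v e from h1 ▸ incL G e) (incR G e) hne).symm e _ _)
      · have hne : (G.ends e).1 ≠ v := fun hc => G.no_loops e (hc.trans h1)
        rw [upd_other G m β γ hne e,
          upd_same G m β γ h1.symm e (incR G e) (h1 ▸ incR G e)] at h'
        exact h'.symm.trans (St.congr G m β
          (other_eq G (show G.Inc v e from h1 ▸ incR G e) (incL G e) hne).symm e _ _)
  · rintro ⟨h1, rfl⟩ e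
    by_cases he : G.Inc v e
    · rcases he with h2 | h2
      · have hne : (G.ends e).2 ≠ v := fun hc => G.no_loops e (hc.trans h2).symm
        rw [upd_same G m β (nbr G m β v) h2.symm e (incL G e) (h2 ▸ incL G e),
          upd_other G m β _ hne e]
        exact St.congr G m β
          (other_eq G (show G.Inc v e from h2 ▸ incL G e) (incR G e) hne) e _ _
      · have hne : (G.ends e).1 ≠ v := fun hc => G.no_loops e (hc.trans h2)
        rw [upd_other G m β _ hne e,
          upd_same G m β (nbr G m β v) h2.symm e (incR G e) (h2 ▸ incR G e)]
        exact (St.congr G m β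
          (other_eq G (show G.Inc v e from h2 ▸ incR G e) (incL G e) hne) e _ _).symm
    · rw [upd_other G m β _ (fun hc => he (Or.inl hc.symm)) e,
        upd_other G m β _ (fun hc => he (Or.inr hc.symm)) e]
      exact h1 e he

/-- Master lemma: the Leibniz action sum in closed form. -/
lemma master (X : ∀ v : Fin d, Idx G m v → Idx G m v → ℂ) (β : St G m) :
    (∑ v : Fin d, ∑ γ : Idx G m v,
        X v (β v) γ * graphTensor G m (Function.update β v γ))
      = ∑ v : Fin d, (if ConsAway G m β v then 1 else 0) * X v (β v) (nbr G m β v) := by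
  apply Finset.sum_congr rfl
  intro v _
  by_cases hCA : ConsAway G m β v
  · rw [if_pos hCA, one_mul]
    have : ∀ γ : Idx G m v, X v (β v) γ * graphTensor G m (Function.update β v γ)
        = if γ = nbr G m β v then X v (β v) γ else 0 := by
      intro γ
      rw [graphTensor_eq]
      by_cases hγ : γ = nbr G m β v
      · rw [if_pos ((cons_update_iff G m β v γ).2 ⟨hCA, hγ⟩), if_pos hγ, mul_one]
      · rw [if_neg (fun hc => hγ ((cons_update_iff G m β v γ).1 hc).2), if_neg hγ, mul_zero]
    simp only [this]
    rw [Finset.sum_ite_eq' Finset.univ]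
    simp
  · rw [if_neg hCA, zero_mul]
    apply Finset.sum_eq_zero
    intro γ _
    rw [graphTensor_eq,
      if_neg (fun hc => hCA ((cons_update_iff G m β v γ).1 hc).1), mul_zero]


/-- Restriction of a global edge-coloring to a vertex. -/
def jr (j : ∀ e : E, Fin (m e)) (v : Fin d) : Idx G m v := fun e => j e.1

/-- Mixed index: values of `α` on edges incident to `w`, else values of `j`. -/
def mix (j : ∀ e : E, Fin (m e)) (w : Fin d) (α : Idx G m w) (v : Fin d) : Idx G m v :=
  fun e => if h : G.Inc w e.1 then α ⟨e.1, h⟩ else j e.1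

/-- The state which is `jr j` away from `w` and `α` at `w`. -/
def βp (j : ∀ e : E, Fin (m e)) (w : Fin d) (α : Idx G m w) : St G m :=
  Function.update (fun v => jr G m j v) w α

lemma Hlem (X : ∀ v : Fin d, Idx G m v → Idx G m v → ℂ)
    (hX : ∀ β : St G m,
      (∑ v : Fin d, (if ConsAway G m β v then 1 else 0) * X v (β v) (nbr G m β v)) = 0)
    (j : ∀ e : E, Fin (m e)) (w : Fin d) (α : Idx G m w) :
    X w α (jr G m j w) + ∑ v ∈ Finset.univ.erase w,
      (if (∀ e : {e : E // G.Inc w e}, ¬ G.Inc v e.1 → α e = j e.1) then (1:ℂ) else 0) *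
        X v (jr G m j v) (mix G m j w α v) = 0 := by
  have H := hX (βp G m j w α)
  rw [← Finset.add_sum_erase _ _ (Finset.mem_univ w)] at H
  -- the term at `w`
  have hw1 : ConsAway G m (βp G m j w α) w := by
    intro e he
    simp only [βp]
    rw [upd_other G m _ α (fun hc => he (Or.inl hc.symm)) e,
      upd_other G m _ α (fun hc => he (Or.inr hc.symm)) e]
    rfl
  have hw2 : (βp G m j w α) w = α := by rw [βp]; exact Function.update_self w α _

  have hw3 : nbr G m (βp G m j w α) w = jr G m j w := by
    funext e
    show (βp G m j w α) (other G w e.1) ⟨e.1, _⟩ = j e.1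
    rw [βp]
    rw [upd_other G m _ α (other_ne G w e.1) e.1]
    rfl
  rw [if_pos hw1, one_mul, hw2, hw3] at H
  -- the terms away from `w`
  have hrest : ∀ v ∈ Finset.univ.erase w,
      (if ConsAway G m (βp G m j w α) v then (1:ℂ) else 0) *
          X v ((βp G m j w α) v) (nbr G m (βp G m j w α) v)
      = (if (∀ e : {e : E // G.Inc w e}, ¬ G.Inc v e.1 → α e = j e.1) then (1:ℂ) else 0) *
          X v (jr G m j v) (mix G m j w α v) := by
    intro v hv
    have hvw : v ≠ w := Finset.ne_of_mem_erase hv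
    have h2 : (βp G m j w α) v = jr G m j v := by rw [βp]; exact Function.update_of_ne hvw α _
    have h3 : nbr G m (βp G m j w α) v = mix G m j w α v := by
      funext e
      obtain ⟨e, he⟩ := e
      show (βp G m j w α) (other G v e) ⟨e, inc_other G he⟩ = mix G m j w α v ⟨e, he⟩
      rw [mix, βp]
      by_cases hwe : G.Inc w e
      · rw [dif_pos hwe]
        exact upd_same G m _ α (other_eq G he hwe (Ne.symm hvw)) e _ hwe
      · rw [dif_neg hwe]
        rw [upd_other G m _ α (fun hc => hwe (hc ▸ inc_other G he)) e]
        rfl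
    have h1 : ConsAway G m (βp G m j w α) v ↔
        (∀ e : {e : E // G.Inc w e}, ¬ G.Inc v e.1 → α e = j e.1) := by
      simp only [βp, ConsAway]
      constructor
      · intro h e hve
        obtain ⟨e, hwe⟩ := e
        have h' := h e hve
        rcases hwe with h4 | h4
        · rw [upd_same G m _ α h4.symm e (incL G e) (h4 ▸ incL G e),
            upd_other G m _ α (fun hc => G.no_loops e (hc.trans h4).symm) e] at h'
          exact h'
        · rw [upd_other G m _ α (fun hc => G.no_loops e (hc.trans h4)) e,
            upd_same G m _ α h4.symm e (incR G e) (h4 ▸ incR G e)] at h'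
          exact h'.symm
      · intro h e hve
        by_cases hwe : G.Inc w e
        · rcases hwe with h4 | h4
          · rw [upd_same G m _ α h4.symm e (incL G e) (h4 ▸ incL G e),
              upd_other G m _ α (fun hc => G.no_loops e (hc.trans h4).symm) e]
            exact h ⟨e, h4 ▸ incL G e⟩ hve
          · rw [upd_other G m _ α (fun hc => G.no_loops e (hc.trans h4)) e,
              upd_same G m _ α h4.symm e (incR G e) (h4 ▸ incR G e)]
            exact (h ⟨e, h4 ▸ incR G e⟩ hve).symm
        · rw [upd_other G m _ α (fun hc => hwe (Or.inl hc.symm)) e,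
            upd_other G m _ α (fun hc => hwe (Or.inr hc.symm)) e]
          rfl
    rw [h2, h3, if_congr h1 rfl rfl]
  rw [Finset.sum_congr rfl hrest] at H
  exact H


/-- A function invariant under single-coordinate updates is constant. -/
lemma update_invariant {ι : Type*} [Fintype ι] [DecidableEq ι] {κ : ι → Type*}
    (f : (∀ i, κ i) → ℂ) (hf : ∀ u i s, f (Function.update u i s) = f u)
    (u u' : ∀ i, κ i) : f u = f u' := by
  have key : ∀ t : Finset ι, f (fun i => if i ∈ t then u i else u' i) = f u' := by
    intro t
    induction t using Finset.induction_on with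
    | empty => simp
    | @insert i t hnot ih =>
      have : (fun j => if j ∈ insert i t then u j else u' j)
          = Function.update (fun j => if j ∈ t then u j else u' j) i (u i) := by
        funext j
        by_cases hj : j = i
        · subst hj; simp
        · rw [Function.update_of_ne hj]
          simp [hj]
      rw [this, hf, ih]
  have := key Finset.univ
  simpa using this

variable (hm : ∀ e : E, 1 ≤ m e)

/-- Base point. -/
def bse (v : Fin d) : Idx G m v := fun e => ⟨0, hm e.1⟩

/-- Extension of a local index to a global edge coloring. -/
def ext (w : Fin d) (α : Idx G m w) : ∀ e : E, Fin (m e) :=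
  fun e => if h : G.Inc w e then α ⟨e, h⟩ else ⟨0, hm e⟩

lemma jr_ext (w : Fin d) (α : Idx G m w) : jr G m (ext G m hm w α) w = α := by
  funext e
  show dite _ _ _ = _
  rw [dif_pos e.2]

lemma jr_ext_other {v w : Fin d} (hvw : v ≠ w) {e : E} (hw : G.Inc w e) (hv : G.Inc v e)
    (α : Idx G m w) :
    jr G m (ext G m hm w α) v = Function.update (bse G m hm v) ⟨e, hv⟩ (α ⟨e, hw⟩) := by
  funext e'
  obtain ⟨e', he'⟩ := e'
  show dite _ _ _ = _
  by_cases hwe : G.Inc w e'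
  · have : e' = e := edge_unique G (Ne.symm hvw) hwe he' hw hv
    subst this
    rw [dif_pos hwe, Function.update_self]
  · rw [dif_neg hwe, Function.update_of_ne (fun hc => hwe (by
      rw [show e' = e from congrArg Subtype.val hc] at he' ⊢; exact hw))]
    rfl

lemma jr_update {j : ∀ e : E, Fin (m e)} {e : E} {s : Fin (m e)} {v : Fin d}
    (hv : G.Inc v e) :
    jr G m (Function.update j e s) v = Function.update (jr G m j v) ⟨e, hv⟩ s := by
  funext e'
  obtain ⟨e', he'⟩ := e'
  show Function.update j e s e' = _
  by_cases he : e' = e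
  · subst he
    rw [Function.update_self, Function.update_self]
  · rw [Function.update_of_ne he, Function.update_of_ne (fun hc => he (congrArg Subtype.val hc))]
    rfl

lemma jr_update' {j : ∀ e : E, Fin (m e)} {e : E} {s : Fin (m e)} {v : Fin d}
    (hv : ¬ G.Inc v e) :
    jr G m (Function.update j e s) v = jr G m j v := by
  funext e'
  show Function.update j e s e'.1 = j e'.1
  rw [Function.update_of_ne (fun hc => hv (by rw [← hc]; exact e'.2))]

variable (X : ∀ v : Fin d, Idx G m v → Idx G m v → ℂ)
variable (hX : ∀ β : St G m,
  (∑ v : Fin d, (if ConsAway G m β v then 1 else 0) * X v (β v) (nbr G m β v)) = 0)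

include hX in
/-- The diagonal trace relation. -/
lemma Dstar (j : ∀ e : E, Fin (m e)) :
    ∑ v : Fin d, X v (jr G m j v) (jr G m j v) = 0 := by
  rcases Nat.eq_zero_or_pos d with hd | hd
  · subst hd
    simp
  have H := Hlem G m X hX j ⟨0, hd⟩ (jr G m j ⟨0, hd⟩)
  set w : Fin d := ⟨0, hd⟩
  have h1 : ∀ v ∈ Finset.univ.erase w,
      (if (∀ e : {e : E // G.Inc w e}, ¬ G.Inc v e.1 → jr G m j w e = j e.1)
          then (1:ℂ) else 0) * X v (jr G m j v) (mix G m j w (jr G m j w) v)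
        = X v (jr G m j v) (jr G m j v) := by
    intro v _
    have hcond : (∀ e : {e : E // G.Inc w e}, ¬ G.Inc v e.1 → jr G m j w e = j e.1) :=
      fun e _ => rfl
    rw [if_pos hcond, one_mul]
    congr 1
    funext e'
    rw [mix]
    by_cases h : G.Inc w e'.1
    · rw [dif_pos h]; rfl
    · rw [dif_neg h]; rfl
  rw [Finset.sum_congr rfl h1] at H
  rw [← Finset.add_sum_erase _ _ (Finset.mem_univ w)]
  exact H

include hm hX in
/-- Entries with at least two off-diagonal discrepancies vanish. -/
lemma Lzero (w : Fin d) (α γ : Idx G m w) (e1 e2 : {e : E // G.Inc w e}) (h12 : e1 ≠ e2)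
    (h1 : α e1 ≠ γ e1) (h2 : α e2 ≠ γ e2) : X w α γ = 0 := by
  have H := Hlem G m X hX (ext G m hm w γ) w α
  rw [jr_ext G m hm w γ] at H
  have hz : ∀ v ∈ Finset.univ.erase w,
      (if (∀ e : {e : E // G.Inc w e}, ¬ G.Inc v e.1 → α e = ext G m hm w γ e.1)
          then (1:ℂ) else 0) * X v (jr G m (ext G m hm w γ) v) (mix G m (ext G m hm w γ) w α v)
        = 0 := by
    intro v hv
    have hvw : v ≠ w := Finset.ne_of_mem_erase hv
    rw [if_neg, zero_mul]
    intro h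
    have key : ∀ e : {e : E // G.Inc w e}, α e ≠ γ e → G.Inc v e.1 := by
      intro e he
      by_contra hc
      apply he
      have := h e hc
      rwa [show ext G m hm w γ e.1 = γ e from by rw [ext, dif_pos e.2]] at this
    exact h12 (Subtype.ext (edge_unique G hvw (key e1 h1) e1.2 (key e2 h2) e2.2))
  rw [Finset.sum_congr rfl hz, Finset.sum_const_zero, add_zero] at H
  exact H


include hX in
lemma Lgauge_raw (j : ∀ e : E, Fin (m e)) (w : Fin d) (e : E) (hw : G.Inc w e)
    (s : Fin (m e)) (hs : s ≠ j e) :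
    X w (Function.update (jr G m j w) ⟨e, hw⟩ s) (jr G m j w)
      + X (other G w e) (jr G m j (other G w e))
          (Function.update (jr G m j (other G w e)) ⟨e, inc_other G hw⟩ s) = 0 := by
  set u : Fin d := other G w e with hu
  have hune : u ≠ w := other_ne G w e
  have hinc : G.Inc u e := inc_other G hw
  set α : Idx G m w := Function.update (jr G m j w) ⟨e, hw⟩ s with hα
  have H := Hlem G m X hX j w α
  have hsum : ∑ v ∈ Finset.univ.erase w,
      (if (∀ e' : {e' : E // G.Inc w e'}, ¬ G.Inc v e'.1 → α e' = j e'.1) then (1:ℂ) else 0) *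
        X v (jr G m j v) (mix G m j w α v)
      = X u (jr G m j u) (Function.update (jr G m j u) ⟨e, hinc⟩ s) := by
    rw [Finset.sum_eq_single_of_mem u (Finset.mem_erase.mpr ⟨hune, Finset.mem_univ u⟩)]
    · have hcond : (∀ e' : {e' : E // G.Inc w e'}, ¬ G.Inc u e'.1 → α e' = j e'.1) := by
        intro e' he'
        have hne : e' ≠ (⟨e, hw⟩ : {e' : E // G.Inc w e'}) :=
          fun hc => he' (by rw [congrArg Subtype.val hc]; exact hinc)
        rw [hα, Function.update_of_ne hne]
        rfl
      rw [if_pos hcond, one_mul]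
      congr 1
      funext e''
      obtain ⟨e'', he''⟩ := e''
      rw [mix]
      by_cases hwe : G.Inc w e''
      · have : e'' = e := edge_unique G (Ne.symm hune) hwe he'' hw hinc
        subst this
        rw [dif_pos hwe]
        have h1 : α ⟨e'', hwe⟩ = s := Function.update_self _ _ _
        have h2 : Function.update (jr G m j u) ⟨e'', hinc⟩ s ⟨e'', he''⟩ = s :=
          Function.update_self _ _ _
        rw [h1, h2]
      · rw [dif_neg hwe,
          Function.update_of_ne (fun hc => hwe (by
            rw [Subtype.mk_eq_mk] at hc; rw [hc]; exact hw))]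
        rfl
    · intro v hv hvu
      rw [if_neg, zero_mul]
      intro hcond
      apply hvu
      have hvi : G.Inc v e := by
        by_contra hc
        have := hcond ⟨e, hw⟩ hc
        rw [hα, Function.update_self] at this
        exact hs this
      rw [hu]
      exact (other_eq G hw hvi (Finset.ne_of_mem_erase hv)).symm
  rw [hsum] at H
  exact H

include hm hX in
lemma Lgauge_indep (w v' : Fin d) (e : E) (hw : G.Inc w e) (hv' : G.Inc v' e)
    (hne : v' ≠ w) (u0 : Idx G m w) (s t : Fin (m e)) (hst : s ≠ t) :
    X w (Function.update u0 ⟨e, hw⟩ s) (Function.update u0 ⟨e, hw⟩ t)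
      = -(X v' (Function.update (bse G m hm v') ⟨e, hv'⟩ t)
          (Function.update (bse G m hm v') ⟨e, hv'⟩ s)) := by
  have hother : other G w e = v' := other_eq G hw hv' hne
  subst hother
  set j : ∀ e' : E, Fin (m e') := Function.update (ext G m hm w u0) e t with hj
  have hjw : jr G m j w = Function.update u0 ⟨e, hw⟩ t := by
    rw [hj, jr_update G m hw, jr_ext G m hm w u0]
  have hju : jr G m j (other G w e)
      = Function.update (bse G m hm (other G w e)) ⟨e, inc_other G hw⟩ t := by
    rw [hj, jr_update G m (inc_other G hw),
      jr_ext_other G m hm (other_ne G w e) hw (inc_other G hw) u0,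
      Function.update_idem]
  have hs : s ≠ j e := by
    rw [hj, Function.update_self]
    exact hst
  have H := Lgauge_raw G m X hX j w e hw s hs
  rw [hjw, hju, Function.update_idem, Function.update_idem] at H
  exact eq_neg_of_add_eq_zero_left H


/-- The gauge matrix extracted from `X` at edge `e`. -/
def YY (e : E) (s t : Fin (m e)) : ℂ :=
  if s = t then
    X (G.ends e).1 (Function.update (bse G m hm (G.ends e).1) ⟨e, incL G e⟩ s)
        (Function.update (bse G m hm (G.ends e).1) ⟨e, incL G e⟩ s)
      - X (G.ends e).1 (bse G m hm (G.ends e).1) (bse G m hm (G.ends e).1)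
  else
    X (G.ends e).1 (Function.update (bse G m hm (G.ends e).1) ⟨e, incL G e⟩ s)
      (Function.update (bse G m hm (G.ends e).1) ⟨e, incL G e⟩ t)

/-- The scalar part extracted from `X`. -/
def xx (v : Fin d) : ℂ := X v (bse G m hm v) (bse G m hm v)

include hX in
lemma Lgauge (w : Fin d) (e : E) (hw : G.Inc w e) (u : Idx G m w) (s t : Fin (m e))
    (hst : s ≠ t) :
    X w (Function.update u ⟨e, hw⟩ s) (Function.update u ⟨e, hw⟩ t)
      = if w = (G.ends e).1 then YY G m hm X e s t else -(YY G m hm X e t s) := by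
  have h := hw
  rcases h with h | h
  · subst h
    rw [if_pos rfl, YY, if_neg hst]
    exact (Lgauge_indep G m hm X hX _ (G.ends e).2 e hw (incR G e) (G.no_loops e).symm
        u s t hst).trans
      (Lgauge_indep G m hm X hX _ (G.ends e).2 e (incL G e) (incR G e) (G.no_loops e).symm
        (bse G m hm (G.ends e).1) s t hst).symm
  · subst h
    rw [if_neg (G.no_loops e).symm, YY, if_neg (Ne.symm hst)]
    exact (Lgauge_indep G m hm X hX _ (G.ends e).1 e hw (incL G e) (G.no_loops e)
      u s t hst)

include hX in
lemma Dpair (j : ∀ e : E, Fin (m e)) (w v' : Fin d) (e : E) (hw : G.Inc w e)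
    (hv' : G.Inc v' e) (hne : v' ≠ w) (s : Fin (m e)) :
    (X w (Function.update (jr G m j w) ⟨e, hw⟩ s) (Function.update (jr G m j w) ⟨e, hw⟩ s)
        - X w (jr G m j w) (jr G m j w))
      + (X v' (Function.update (jr G m j v') ⟨e, hv'⟩ s)
            (Function.update (jr G m j v') ⟨e, hv'⟩ s)
          - X v' (jr G m j v') (jr G m j v')) = 0 := by
  have hwv : w ≠ v' := Ne.symm hne
  set j' : ∀ e' : E, Fin (m e') := Function.update j e s with hj'
  have key : ∑ v : Fin d, (X v (jr G m j' v) (jr G m j' v) - X v (jr G m j v) (jr G m j v))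
      = 0 := by
    rw [Finset.sum_sub_distrib, Dstar G m X hX j', Dstar G m X hX j, sub_zero]
  have hpair : ∑ v ∈ ({w, v'} : Finset (Fin d)),
      (X v (jr G m j' v) (jr G m j' v) - X v (jr G m j v) (jr G m j v)) = 0 := by
    rw [Finset.sum_subset (Finset.subset_univ _)]
    · exact key
    · intro v _ hv
      simp only [Finset.mem_insert, Finset.mem_singleton, not_or] at hv
      have hvi : ¬ G.Inc v e := by
        intro hvi
        rcases hvi with h | h <;> rcases hw with h2 | h2 <;> rcases hv' with h3 | h3 <;>
          first
            | exact hv.1 (h.trans h2.symm)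
            | exact hv.2 (h.trans h3.symm)
            | (exfalso; exact hne (h3.trans h2.symm))
      rw [jr_update' G m hvi, sub_self]
  rw [Finset.sum_pair hwv] at hpair
  rw [← jr_update G m hw, ← jr_update G m hv']
  exact hpair

include hm hX in
lemma Dcocycle (w v' : Fin d) (e : E) (hw : G.Inc w e) (hv' : G.Inc v' e) (hne : v' ≠ w)
    (u : Idx G m w) (s : Fin (m e)) :
    X w (Function.update u ⟨e, hw⟩ s) (Function.update u ⟨e, hw⟩ s) - X w u u
      = X v' (Function.update (bse G m hm v') ⟨e, hv'⟩ (u ⟨e, hw⟩))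
            (Function.update (bse G m hm v') ⟨e, hv'⟩ (u ⟨e, hw⟩))
        - X v' (Function.update (bse G m hm v') ⟨e, hv'⟩ s)
            (Function.update (bse G m hm v') ⟨e, hv'⟩ s) := by
  have H := Dpair G m X hX (ext G m hm w u) w v' e hw hv' hne s
  rw [jr_ext G m hm w u, jr_ext_other G m hm hne hw hv' u, Function.update_idem] at H
  have := eq_neg_of_add_eq_zero_left H
  rw [neg_sub] at this
  exact this


include hm hX in
lemma FFflip (w v' : Fin d) (e : E) (hw : G.Inc w e) (hv' : G.Inc v' e) (hne : v' ≠ w)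
    (s : Fin (m e)) :
    (X w (Function.update (bse G m hm w) ⟨e, hw⟩ s)
        (Function.update (bse G m hm w) ⟨e, hw⟩ s) - xx G m hm X w)
      = -(X v' (Function.update (bse G m hm v') ⟨e, hv'⟩ s)
          (Function.update (bse G m hm v') ⟨e, hv'⟩ s) - xx G m hm X v') := by
  have H := Dpair G m X hX (fun e' => (⟨0, hm e'⟩ : Fin (m e'))) w v' e hw hv' hne s
  have hb : ∀ v : Fin d, jr G m (fun e' => (⟨0, hm e'⟩ : Fin (m e'))) v = bse G m hm v :=
    fun v => rfl
  rw [hb, hb] at H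
  exact eq_neg_of_add_eq_zero_left H

include hm hX in
lemma Dtrace : ∑ v : Fin d, xx G m hm X v = 0 :=
  Dstar G m X hX (fun e' => (⟨0, hm e'⟩ : Fin (m e')))

include hm hX in
lemma Ddiag (w : Fin d) (u : Idx G m w) :
    X w u u = xx G m hm X w + ∑ e : {e : E // G.Inc w e},
      (X w (Function.update (bse G m hm w) e (u e)) (Function.update (bse G m hm w) e (u e))
        - xx G m hm X w) := by
  set f : Idx G m w → ℂ := fun u' => X w u' u' + ∑ e : {e : E // G.Inc w e},
    X (other G w e.1) (Function.update (bse G m hm (other G w e.1)) ⟨e.1, inc_other G e.2⟩ (u' e))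
      (Function.update (bse G m hm (other G w e.1)) ⟨e.1, inc_other G e.2⟩ (u' e)) with hf
  have hinv : ∀ (u' : Idx G m w) (e0 : {e : E // G.Inc w e}) (s : Fin (m e0.1)),
      f (Function.update u' e0 s) = f u' := by
    intro u' e0 s
    have h1 := Dcocycle G m hm X hX w (other G w e0.1) e0.1 e0.2 (inc_other G e0.2)
      (other_ne G w e0.1) u' s
    have h2 : ∑ e : {e : E // G.Inc w e},
        (X (other G w e.1)
            (Function.update (bse G m hm (other G w e.1)) ⟨e.1, inc_other G e.2⟩
              (Function.update u' e0 s e))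
            (Function.update (bse G m hm (other G w e.1)) ⟨e.1, inc_other G e.2⟩
              (Function.update u' e0 s e))
          - X (other G w e.1)
            (Function.update (bse G m hm (other G w e.1)) ⟨e.1, inc_other G e.2⟩ (u' e))
            (Function.update (bse G m hm (other G w e.1)) ⟨e.1, inc_other G e.2⟩ (u' e)))
        = X (other G w e0.1)
            (Function.update (bse G m hm (other G w e0.1)) ⟨e0.1, inc_other G e0.2⟩ s)
            (Function.update (bse G m hm (other G w e0.1)) ⟨e0.1, inc_other G e0.2⟩ s)
          - X (other G w e0.1)
            (Function.update (bse G m hm (other G w e0.1)) ⟨e0.1, inc_other G e0.2⟩ (u' e0))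
            (Function.update (bse G m hm (other G w e0.1)) ⟨e0.1, inc_other G e0.2⟩ (u' e0)) := by
      rw [Finset.sum_eq_single_of_mem e0 (Finset.mem_univ e0)]
      · rw [Function.update_self]
      · intro e he hne
        rw [Function.update_of_ne hne, sub_self]
    rw [hf]
    simp only
    rw [Finset.sum_sub_distrib] at h2
    linear_combination h1 + h2
  have hconst := update_invariant f hinv u (bse G m hm w)
  rw [hf] at hconst
  simp only at hconst
  -- at the base point, updates are trivial
  have hbase : ∀ e : {e : E // G.Inc w e},
      Function.update (bse G m hm (other G w e.1)) ⟨e.1, inc_other G e.2⟩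
          (bse G m hm w e)
        = bse G m hm (other G w e.1) := by
    intro e
    exact Function.update_eq_self _ _
  have hXbase : X w u u + ∑ e : {e : E // G.Inc w e},
      X (other G w e.1)
        (Function.update (bse G m hm (other G w e.1)) ⟨e.1, inc_other G e.2⟩ (u e))
        (Function.update (bse G m hm (other G w e.1)) ⟨e.1, inc_other G e.2⟩ (u e))
      = xx G m hm X w + ∑ e : {e : E // G.Inc w e}, xx G m hm X (other G w e.1) := by
    rw [hconst]
    congr 1
    apply Finset.sum_congr rfl
    intro e _
    rw [hbase e]
    rfl
  have hflip : ∀ e : {e : E // G.Inc w e},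
      (X w (Function.update (bse G m hm w) e (u e)) (Function.update (bse G m hm w) e (u e))
          - xx G m hm X w)
        = xx G m hm X (other G w e.1)
          - X (other G w e.1)
            (Function.update (bse G m hm (other G w e.1)) ⟨e.1, inc_other G e.2⟩ (u e))
            (Function.update (bse G m hm (other G w e.1)) ⟨e.1, inc_other G e.2⟩ (u e)) := by
    intro e
    have := FFflip G m hm X hX w (other G w e.1) e.1 e.2 (inc_other G e.2) (other_ne G w e.1)
      (u e)
    rw [this]
    ring
  rw [Finset.sum_congr rfl (fun e _ => hflip e)]
  rw [Finset.sum_sub_distrib]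
  linear_combination hXbase


lemma sum_dite_inc (v : Fin d) (F : ∀ e : E, G.Inc v e → ℂ) :
    ∑ e : E, (if h : G.Inc v e then F e h else 0)
      = ∑ e : {e : E // G.Inc v e}, F e.1 e.2 := by
  rw [← Finset.sum_filter_add_sum_filter_not Finset.univ (G.Inc v)]
  have h2 : ∑ e ∈ Finset.univ.filter (fun e => ¬ G.Inc v e),
      (if h : G.Inc v e then F e h else 0) = 0 := by
    apply Finset.sum_eq_zero
    intro e he
    rw [dif_neg (Finset.mem_filter.mp he).2]
  rw [h2, add_zero]
  rw [Finset.sum_subtype (p := fun e => G.Inc v e) (Finset.univ.filter (fun e => G.Inc v e))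
    (fun e => by simp) (fun e => if h : G.Inc v e then F e h else 0)]
  apply Finset.sum_congr rfl
  intro e _
  rw [dif_pos e.2]

include hm hX in
lemma Lformula (v : Fin d) (β γ : Idx G m v) :
    X v β γ =
      (∑ e : E,
        if h : G.Inc v e then
          (if v = (G.ends e).1
            then YY G m hm X e (β ⟨e, h⟩) (γ ⟨e, h⟩)
            else -(YY G m hm X e (γ ⟨e, h⟩) (β ⟨e, h⟩))) *
          ∏ e' : {e' : E // G.Inc v e'},
            (if e'.1 = e then (1 : ℂ) else if β e' = γ e' then 1 else 0)
        else 0)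
      + xx G m hm X v * (if β = γ then 1 else 0) := by
  by_cases hbg : β = γ
  · subst hbg
    rw [if_pos rfl, mul_one]
    have hprod : ∀ e : E, (∏ e' : {e' : E // G.Inc v e'},
        (if e'.1 = e then (1 : ℂ) else if β e' = β e' then 1 else 0)) = 1 := by
      intro e
      apply Finset.prod_eq_one
      intro e' _
      split
      · rfl
      · rw [if_pos rfl]
    have hterm : ∀ (e : E) (h : G.Inc v e),
        (if v = (G.ends e).1
          then YY G m hm X e (β ⟨e, h⟩) (β ⟨e, h⟩)
          else -(YY G m hm X e (β ⟨e, h⟩) (β ⟨e, h⟩)))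
        = X v (Function.update (bse G m hm v) ⟨e, h⟩ (β ⟨e, h⟩))
            (Function.update (bse G m hm v) ⟨e, h⟩ (β ⟨e, h⟩)) - xx G m hm X v := by
      intro e h
      have hh := h
      rcases hh with h1 | h1
      · subst h1
        rw [if_pos rfl, YY, if_pos rfl]
        rfl
      · subst h1
        rw [if_neg (G.no_loops e).symm, YY, if_pos rfl,
          FFflip G m hm X hX _ (G.ends e).1 e h (incL G e) (G.no_loops e) (β ⟨e, h⟩)]
        rfl
    calc X v β β = xx G m hm X v + ∑ e : {e : E // G.Inc v e},
          (X v (Function.update (bse G m hm v) e (β e)) (Function.update (bse G m hm v) e (β e))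
            - xx G m hm X v) := Ddiag G m hm X hX v β
      _ = _ := by
          rw [add_comm]
          congr 1
          rw [sum_dite_inc G v (fun e h =>
            (if v = (G.ends e).1
              then YY G m hm X e (β ⟨e, h⟩) (β ⟨e, h⟩)
              else -(YY G m hm X e (β ⟨e, h⟩) (β ⟨e, h⟩))) *
            ∏ e' : {e' : E // G.Inc v e'},
              (if e'.1 = e then (1 : ℂ) else if β e' = β e' then 1 else 0))]
          apply Finset.sum_congr rfl
          intro e _
          rw [hprod e.1, mul_one, hterm e.1 e.2]
  · rw [if_neg hbg, mul_zero, add_zero]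
    have hex : ∃ e0 : {e : E // G.Inc v e}, β e0 ≠ γ e0 := by
      by_contra hc
      push_neg at hc
      exact hbg (funext hc)
    obtain ⟨e0, hne0⟩ := hex
    by_cases h2 : ∃ e1 : {e : E // G.Inc v e}, e1 ≠ e0 ∧ β e1 ≠ γ e1
    · obtain ⟨e1, h10, hne1⟩ := h2
      rw [Lzero G m hm X hX v β γ e0 e1 (Ne.symm h10) hne0 hne1]
      symm
      apply Finset.sum_eq_zero
      intro e _
      by_cases hve : G.Inc v e
      · rw [dif_pos hve]
        by_cases he0 : e0.1 = e
        · have he1 : e1.1 ≠ e := fun hc => h10 (Subtype.ext (hc.trans he0.symm))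
          rw [Finset.prod_eq_zero (Finset.mem_univ e1)
            (by rw [if_neg he1, if_neg hne1]), mul_zero]
        · rw [Finset.prod_eq_zero (Finset.mem_univ e0)
            (by rw [if_neg he0, if_neg hne0]), mul_zero]
      · rw [dif_neg hve]
    · push_neg at h2
      have hγ : γ = Function.update β e0 (γ e0) := by
        funext e'
        by_cases he' : e' = e0
        · subst he'
          rw [Function.update_self]
        · rw [Function.update_of_ne he', h2 e' he']
      have hβ : β = Function.update β e0 (β e0) := (Function.update_eq_self _ _).symm
      have hL : X v β γ = if v = (G.ends e0.1).1
          then YY G m hm X e0.1 (β e0) (γ e0) else -(YY G m hm X e0.1 (γ e0) (β e0)) := by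
        have hLg := Lgauge G m hm X hX v e0.1 e0.2 β (β e0) (γ e0) hne0
        conv_lhs => rw [hβ, hγ]
        exact hLg
      rw [hL]
      symm
      rw [Finset.sum_eq_single_of_mem e0.1 (Finset.mem_univ e0.1)]
      · rw [dif_pos e0.2]
        have hprod : (∏ e' : {e' : E // G.Inc v e'},
            (if e'.1 = e0.1 then (1 : ℂ) else if β e' = γ e' then 1 else 0)) = 1 := by
          apply Finset.prod_eq_one
          intro e' _
          by_cases he' : e'.1 = e0.1
          · rw [if_pos he']
          · rw [if_neg he', if_pos (h2 e' (fun hc => he' (congrArg Subtype.val hc)))]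
        rw [hprod, mul_one]
      · intro e _ hee
        by_cases hve : G.Inc v e
        · rw [dif_pos hve,
            Finset.prod_eq_zero (Finset.mem_univ e0)
              (by rw [if_neg (fun hc => hee (hc.symm.trans rfl) : ¬ e0.1 = e), if_neg hne0]),
            mul_zero]
        · rw [dif_neg hve]


lemma boole_mul (P Q : Prop) [Decidable P] [Decidable Q] :
    (if P then (1:ℂ) else 0) * (if Q then 1 else 0) = if P ∧ Q then 1 else 0 := by
  by_cases hp : P <;> by_cases hq : Q <;> simp [hp, hq]

lemma factor_eq (P Q : Prop) [Decidable P] [Decidable Q] :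
    (if P then (1:ℂ) else if Q then 1 else 0) = if P ∨ Q then 1 else 0 := by
  by_cases hp : P <;> by_cases hq : Q <;> simp [hp, hq]

lemma cons_at_iff (β : St G m) (w : Fin d) (e' : E) (hw' : G.Inc w e') :
    (β w ⟨e', hw'⟩ = nbr G m β w ⟨e', hw'⟩) ↔
      (β (G.ends e').1 ⟨e', incL G e'⟩ = β (G.ends e').2 ⟨e', incR G e'⟩) := by
  have h := hw'
  rcases h with h | h
  · have h1 : β w ⟨e', hw'⟩ = β (G.ends e').1 ⟨e', incL G e'⟩ := St.congr G m β h e' _ _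
    have h2 : nbr G m β w ⟨e', hw'⟩ = β (G.ends e').2 ⟨e', incR G e'⟩ :=
      St.congr G m β
        (other_eq G hw' (incR G e') (fun hc => G.no_loops e' (hc.trans h).symm)) e' _ _
    rw [h1, h2]
  · have h1 : β w ⟨e', hw'⟩ = β (G.ends e').2 ⟨e', incR G e'⟩ := St.congr G m β h e' _ _
    have h2 : nbr G m β w ⟨e', hw'⟩ = β (G.ends e').1 ⟨e', incL G e'⟩ :=
      St.congr G m β
        (other_eq G hw' (incL G e') (fun hc => G.no_loops e' (hc.trans h))) e' _ _
    rw [h1, h2, eq_comm]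

lemma prodCA (β : St G m) (w : Fin d) (e : E) (hw : G.Inc w e) :
    (if ConsAway G m β w then (1:ℂ) else 0) *
      (∏ e' : {e' : E // G.Inc w e'},
        (if e'.1 = e then (1 : ℂ) else if β w e' = nbr G m β w e' then 1 else 0))
    = if (∀ e'' : E, e'' ≠ e →
        β (G.ends e'').1 ⟨e'', incL G e''⟩ = β (G.ends e'').2 ⟨e'', incR G e''⟩)
      then 1 else 0 := by
  rw [Finset.prod_congr rfl (fun e' _ => factor_eq (e'.1 = e)
    (β w e' = nbr G m β w e')), Finset.prod_boole, boole_mul]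
  have hiff : (ConsAway G m β w ∧ ∀ e' : {e' : E // G.Inc w e'}, e' ∈ Finset.univ →
      (e'.1 = e ∨ β w e' = nbr G m β w e')) ↔
      (∀ e'' : E, e'' ≠ e →
        β (G.ends e'').1 ⟨e'', incL G e''⟩ = β (G.ends e'').2 ⟨e'', incR G e''⟩) := by
    constructor
    · rintro ⟨hca, hall⟩ e'' hne
      by_cases hwi : G.Inc w e''
      · exact (cons_at_iff G m β w e'' hwi).mp
          ((hall ⟨e'', hwi⟩ (Finset.mem_univ _)).resolve_left hne)
      · exact hca e'' hwi
    · intro hk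
      refine ⟨fun e'' hni => hk e'' (fun hc => hni (by rw [hc]; exact hw)), ?_⟩
      intro e' _
      by_cases hc : e'.1 = e
      · exact Or.inl hc
      · exact Or.inr ((cons_at_iff G m β w e'.1 e'.2).mpr (hk e'.1 hc))
  by_cases hk : (∀ e'' : E, e'' ≠ e →
      β (G.ends e'').1 ⟨e'', incL G e''⟩ = β (G.ends e'').2 ⟨e'', incR G e''⟩)
  · rw [if_pos hk, if_pos (hiff.mpr hk)]
  · rw [if_neg hk, if_neg (fun hc => hk (hiff.mp hc))]

lemma Leasy (Y : ∀ e : E, Fin (m e) → Fin (m e) → ℂ) (x : Fin d → ℂ)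
    (hx : ∑ v : Fin d, x v = 0)
    (hform : ∀ v (β γ : Idx G m v), X v β γ =
      (∑ e : E,
        if h : G.Inc v e then
          (if v = (G.ends e).1
            then Y e (β ⟨e, h⟩) (γ ⟨e, h⟩)
            else -(Y e (γ ⟨e, h⟩) (β ⟨e, h⟩))) *
          ∏ e' : {e' : E // G.Inc v e'},
            (if e'.1 = e then (1 : ℂ) else if β e' = γ e' then 1 else 0)
        else 0)
      + x v * (if β = γ then 1 else 0)) (β : St G m) :
    ∑ v : Fin d, (if ConsAway G m β v then (1:ℂ) else 0) * X v (β v) (nbr G m β v) = 0 := by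
  have hsplit : ∀ v : Fin d,
      (if ConsAway G m β v then (1:ℂ) else 0) * X v (β v) (nbr G m β v)
      = (∑ e : E, (if ConsAway G m β v then (1:ℂ) else 0) *
          (if h : G.Inc v e then
            (if v = (G.ends e).1
              then Y e (β v ⟨e, h⟩) (nbr G m β v ⟨e, h⟩)
              else -(Y e (nbr G m β v ⟨e, h⟩) (β v ⟨e, h⟩))) *
            ∏ e' : {e' : E // G.Inc v e'},
              (if e'.1 = e then (1 : ℂ) else if β v e' = nbr G m β v e' then 1 else 0)
          else 0))
        + x v * (if Cons G m β then 1 else 0) := by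
    intro v
    rw [hform v (β v) (nbr G m β v), mul_add, Finset.mul_sum]
    congr 1
    have hiff : Cons G m β ↔ (ConsAway G m β v ∧ β v = nbr G m β v) := by
      have := cons_update_iff G m β v (β v)
      rwa [Function.update_eq_self] at this
    by_cases hca : ConsAway G m β v
    · by_cases heq : β v = nbr G m β v
      · rw [if_pos hca, if_pos heq, if_pos (hiff.mpr ⟨hca, heq⟩)]; ring
      · rw [if_pos hca, if_neg heq, if_neg (fun hc => heq (hiff.mp hc).2)]; ring
    · rw [if_neg hca, if_neg (fun hc => hca (hiff.mp hc).1)]; ring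
  rw [Finset.sum_congr rfl (fun v _ => hsplit v), Finset.sum_add_distrib]
  have hpart2 : ∑ v : Fin d, x v * (if Cons G m β then (1:ℂ) else 0) = 0 := by
    rw [← Finset.sum_mul, hx, zero_mul]
  rw [hpart2, add_zero, Finset.sum_comm]
  apply Finset.sum_eq_zero
  intro e _
  have hab : (G.ends e).1 ≠ (G.ends e).2 := G.no_loops e
  rw [← Finset.sum_subset
    (Finset.subset_univ ({(G.ends e).1, (G.ends e).2} : Finset (Fin d)))
    (fun v _ hv => by
      have hvi : ¬ G.Inc v e := by
        intro hvi
        simp only [Finset.mem_insert, Finset.mem_singleton, not_or] at hv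
        rcases hvi with h | h
        · exact hv.1 h
        · exact hv.2 h
      rw [dif_neg hvi, mul_zero]),
    Finset.sum_pair hab]
  rw [dif_pos (incL G e), dif_pos (incR G e), if_pos rfl, if_neg (Ne.symm hab)]
  have hna : nbr G m β (G.ends e).1 ⟨e, incL G e⟩ = β (G.ends e).2 ⟨e, incR G e⟩ :=
    St.congr G m β
      (other_eq G (incL G e) (incR G e) (Ne.symm hab)) e _ _
  have hnb : nbr G m β (G.ends e).2 ⟨e, incR G e⟩ = β (G.ends e).1 ⟨e, incL G e⟩ :=
    St.congr G m β
      (other_eq G (incR G e) (incL G e) hab) e _ _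
  rw [hna, hnb]
  have hPA := prodCA G m β (G.ends e).1 e (incL G e)
  have hPB := prodCA G m β (G.ends e).2 e (incR G e)
  linear_combination (Y e (β (G.ends e).1 ⟨e, incL G e⟩) (β (G.ends e).2 ⟨e, incR G e⟩)) * hPA
    - (Y e (β (G.ends e).1 ⟨e, incL G e⟩) (β (G.ends e).2 ⟨e, incR G e⟩)) * hPB

end AnnGT

/-- Theorem (isotropy Lie algebra of a graph tensor): the annihilator of `T(Γ,m)` under
the Leibniz action equals the sum of the gauge Lie algebras of the edges and the
traceless scalar tuples.  Endomorphisms of `W_v` are written as matrices in the standard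
product basis; the gauge element of an edge `e` with matrix `Y` acts as `Y` on the factor
`ℂ^{m_e}` at the first endpoint of `e`, as `−Yᵀ` at the second endpoint, and is `0` at
all other vertices. -/
theorem ann_graphTensor {d : ℕ} {E : Type} [Fintype E] [DecidableEq E]
    (G : GraphData d E) (m : E → ℕ) (hm : ∀ e, 1 ≤ m e) :
    { X : ∀ v : Fin d, ((∀ e : {e : E // G.Inc v e}, Fin (m e.1)) →
        (∀ e : {e : E // G.Inc v e}, Fin (m e.1)) → ℂ) |
      ∀ β : (∀ v : Fin d, (∀ e : {e : E // G.Inc v e}, Fin (m e.1))),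
        (∑ v : Fin d, ∑ γ : (∀ e : {e : E // G.Inc v e}, Fin (m e.1)),
          X v (β v) γ * graphTensor G m (Function.update β v γ)) = 0 }
    = { X | ∃ (Y : ∀ e : E, Fin (m e) → Fin (m e) → ℂ) (x : Fin d → ℂ),
        (∑ v : Fin d, x v) = 0 ∧
        ∀ v β γ, X v β γ =
          (∑ e : E,
            if h : G.Inc v e then
              (if v = (G.ends e).1
                then Y e (β ⟨e, h⟩) (γ ⟨e, h⟩)
                else -(Y e (γ ⟨e, h⟩) (β ⟨e, h⟩))) *
              ∏ e' : {e' : E // G.Inc v e'},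
                (if e'.1 = e then (1 : ℂ) else if β e' = γ e' then 1 else 0)
            else 0)
          + x v * (if β = γ then 1 else 0) } := by
  ext X
  simp only [Set.mem_setOf_eq]
  constructor
  · intro hann
    have hX : ∀ β : AnnGT.St G m,
        (∑ v : Fin d, (if AnnGT.ConsAway G m β v then (1:ℂ) else 0) *
          X v (β v) (AnnGT.nbr G m β v)) = 0 := by
      intro β
      rw [← AnnGT.master G m X β]
      exact hann β
    exact ⟨AnnGT.YY G m hm X, AnnGT.xx G m hm X, AnnGT.Dtrace G m hm X hX,
      fun v β γ => AnnGT.Lformula G m hm X hX v β γ⟩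
  · rintro ⟨Y, x, hx, hform⟩ β
    rw [AnnGT.master G m X β]
    exact AnnGT.Leasy G m X Y x hx hform β
end

section
/- Let 1 ≤ k ≤ d, let U_1,…,U_k be nonzero finite-dimensional complex vector spaces, let W′_1,…,W′_d be finite-dimensional complex vector spaces, and let T′ ∈ W′_1⊗⋯⊗W′_d be a nonzero concise tensor. Set V_0 = U_1*⊗⋯⊗U_k*, V_j = U_j⊗W′_j for 1 ≤ j ≤ k, and V_j = W′_j for k < j ≤ d. Let T ∈ V_0⊗V_1⊗⋯⊗V_d be the Kronecker product of the star graph tensor with T′, i.e. the image of T′ under the linear map sending w_1⊗⋯⊗w_d to Σ_{i_1,…,i_k} (e*_{i_1}⊗⋯⊗e*_{i_k}) ⊗ (e_{i_1}⊗w_1) ⊗ ⋯ ⊗ (e_{i_k}⊗w_k) ⊗ w_{k+1} ⊗ ⋯ ⊗ w_d, where (e_i) runs over a basis of each U_j and (e*_i) is the dual basis. Then the annihilator of T under the Leibniz action in End(V_0)⊕End(V_1)⊕⋯⊕End(V_d) equals the sum of: (a) the tuples (0, Id_{U_1}⊗Θ_1, …, Id_{U_k}⊗Θ_k, Θ_{k+1},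 …, Θ_d) with (Θ_1,…,Θ_d) ∈ ann(T′), and (b) for each j ∈ {1,…,k}, the tuples whose 0-component acts as −Yᵀ on the factor U_j* of V_0 and as the identity on the other factors, whose j-component is Y⊗Id_{W′_j}, and whose other components are 0, with Y ∈ End(U_j). -/
open scoped BigOperators

/-- Conciseness of a tensor in coordinates: every functional killed by the `i`-th
flattening is zero. -/
def Concise {d : ℕ} {b : Fin d → ℕ} (T : (∀ j : Fin d, Fin (b j)) → ℂ) : Prop :=
  ∀ (i : Fin d) (c : Fin (b i) → ℂ),
    (∀ β : ∀ j : Fin d, Fin (b j),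
      (∑ p : Fin (b i), c p * T (Function.update β i p)) = 0) → c = 0

/-- The Kronecker product of the star graph tensor with a tensor `T′`, in coordinates:
the 0-th factor is `U_1*⊗⋯⊗U_k*` (realized as `⨂_j U_j*` with `U_j = ℂ^1` for `j ≥ k`)
and the `j`-th factor is `V_j = U_j ⊗ W′_j`. -/
noncomputable def starKron {d : ℕ} (a b : Fin d → ℕ)
    (T' : (∀ j : Fin d, Fin (b j)) → ℂ) :
    ((∀ j : Fin d, Fin (a j)) × (∀ j : Fin d, Fin (a j) × Fin (b j))) → ℂ :=
  fun β =>
    (∏ j : Fin d, if (β.2 j).1 = β.1 j then (1 : ℂ) else 0) * T' fun j => (β.2 j).2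


lemma prod_ind {d : ℕ} {α : Fin d → Type*} [∀ j, DecidableEq (α j)] (f g : ∀ j, α j) :
    (∏ j : Fin d, if f j = g j then (1:ℂ) else 0) = if f = g then 1 else 0 := by
  by_cases h : f = g
  · simp [h]
  · obtain ⟨j, hj⟩ := Function.ne_iff.mp h
    rw [if_neg h]
    exact Finset.prod_eq_zero (Finset.mem_univ j) (if_neg hj)

lemma prod_extract {d : ℕ} (g : Fin d → ℂ) (j : Fin d) :
    (∏ j' : Fin d, g j') = g j * ∏ j' : Fin d, (if j' = j then 1 else g j') := by
  have h1 : (fun j' => if j' = j then (1:ℂ) else g j') = Function.update g j 1 := by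
    funext j'; simp [Function.update_apply]
  rw [h1, Finset.prod_update_of_mem (Finset.mem_univ j)]
  rw [← Finset.mul_prod_erase Finset.univ g (Finset.mem_univ j)]
  rw [Finset.sdiff_singleton_eq_erase]
  ring

lemma const_of_update {d : ℕ} {a : Fin d → ℕ} (F : (∀ j, Fin (a j)) → ℂ)
    (h : ∀ γ (j : Fin d) (r : Fin (a j)), F (Function.update γ j r) = F γ)
    (γ γ' : ∀ j, Fin (a j)) : F γ = F γ' := by
  have key : ∀ s : Finset (Fin d), ∀ g g' : (∀ j, Fin (a j)),
      (∀ j ∉ s, g j = g' j) → F g = F g' := by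
    intro s
    induction s using Finset.induction_on with
    | empty => intro g g' hg; congr 1; funext j; exact hg j (Finset.notMem_empty j)
    | @insert j s hj ih =>
        intro g g' hg
        have h1 : F g = F (Function.update g j (g' j)) := (h g j (g' j)).symm
        rw [h1]
        apply ih
        intro j' hj'
        rcases eq_or_ne j' j with rfl | hne
        · simp
        · rw [Function.update_of_ne hne]
          exact hg j' (by simp [hj', hne])
  exact key Finset.univ γ γ' (fun j hj => absurd (Finset.mem_univ j) hj)

lemma reduce {d : ℕ} (a b : Fin d → ℕ) (T' : (∀ j : Fin d, Fin (b j)) → ℂ)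
    (Z : ((∀ j : Fin d, Fin (a j)) → (∀ j : Fin d, Fin (a j)) → ℂ) ×
        (∀ j : Fin d, (Fin (a j) × Fin (b j)) → (Fin (a j) × Fin (b j)) → ℂ))
    (β₀ : ∀ j : Fin d, Fin (a j)) (β : ∀ j : Fin d, Fin (a j) × Fin (b j)) :
    (∑ γ₀ : (∀ j : Fin d, Fin (a j)), Z.1 β₀ γ₀ * starKron a b T' (γ₀, β)) +
        (∑ j : Fin d, ∑ γ : Fin (a j) × Fin (b j),
          Z.2 j (β j) γ * starKron a b T' (β₀, Function.update β j γ))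
    = Z.1 β₀ (fun j => (β j).1) * T' (fun j => (β j).2)
      + ∑ j : Fin d,
          (∏ j' : Fin d, if j' = j then (1:ℂ) else if (β j').1 = β₀ j' then 1 else 0)
          * (∑ q : Fin (b j), Z.2 j (β j) (β₀ j, q)
              * T' (Function.update (fun j' => (β j').2) j q)) := by
  congr 1
  · have h1 : ∀ γ₀ : (∀ j : Fin d, Fin (a j)), starKron a b T' (γ₀, β)
        = (if (fun j => (β j).1) = γ₀ then (1:ℂ) else 0) * T' (fun j => (β j).2) := by
      intro γ₀; unfold starKron; rw [prod_ind]
    simp only [h1, mul_ite, ite_mul, mul_zero, zero_mul, mul_one, one_mul]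
    rw [Finset.sum_ite_eq]
    simp
  · apply Finset.sum_congr rfl
    intro j _
    have h2 : ∀ γ : Fin (a j) × Fin (b j),
        starKron a b T' (β₀, Function.update β j γ)
        = ((if γ.1 = β₀ j then (1:ℂ) else 0)
            * ∏ j' : Fin d, (if j' = j then 1 else if (β j').1 = β₀ j' then 1 else 0))
          * T' (Function.update (fun j' => (β j').2) j γ.2) := by
      intro γ
      unfold starKron
      congr 1
      · rw [prod_extract (fun j' => if ((Function.update β j γ) j').1 = β₀ j' then (1:ℂ) else 0) j]
        congr 1
        · simp
        · apply Finset.prod_congr rfl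
          intro j' _
          rcases eq_or_ne j' j with rfl | hne
          · simp
          · rw [if_neg hne, if_neg hne, Function.update_of_ne hne]
      · congr 1
        funext j'
        rcases eq_or_ne j' j with rfl | hne
        · simp
        · simp [Function.update_of_ne hne]
    simp only [h2]
    rw [Fintype.sum_prod_type]
    rw [Finset.sum_eq_single (β₀ j)]
    · rw [Finset.mul_sum]
      apply Finset.sum_congr rfl
      intro q _
      rw [if_pos rfl]
      ring
    · intro x _ hx
      apply Finset.sum_eq_zero
      intro q _
      rw [if_neg hx]
      ring
    · intro h
      exact absurd (Finset.mem_univ _) h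

/-- Theorem (isotropy of a Kronecker product with a star graph tensor): for a nonzero
concise tensor `T′ ∈ W′_1⊗⋯⊗W′_d` and the star with `k` edges of bond dimensions
`a_1,…,a_k` (here `a_j = 1` for `j ≥ k`, realizing `V_j = W′_j` as `ℂ^1⊗W′_j`), the
annihilator of `T = S ⊠ T′` under the Leibniz action equals the sum of
(a) the tuples `(0, Id_{U_1}⊗Θ_1, …, Θ_d)` with `(Θ_1,…,Θ_d) ∈ ann(T′)`, and
(b) for each `j < k`, the gauge tuples acting by `−Yᵀ` on the factor `U_j*` of `V_0` and
by `Y ⊗ Id_{W′_j}` on `V_j`, with `Y ∈ End(U_j)`. -/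
theorem ann_starKron {d k : ℕ} (hk1 : 1 ≤ k) (hkd : k ≤ d)
    (a b : Fin d → ℕ) (ha : ∀ j, 1 ≤ a j) (hak : ∀ j : Fin d, k ≤ (j : ℕ) → a j = 1)
    (T' : (∀ j : Fin d, Fin (b j)) → ℂ) (hT'0 : T' ≠ 0) (hT'c : Concise T') :
    { Z : ((∀ j : Fin d, Fin (a j)) → (∀ j : Fin d, Fin (a j)) → ℂ) ×
        (∀ j : Fin d, (Fin (a j) × Fin (b j)) → (Fin (a j) × Fin (b j)) → ℂ) |
      ∀ (β₀ : ∀ j : Fin d, Fin (a j)) (β : ∀ j : Fin d, Fin (a j) × Fin (b j)),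
        (∑ γ₀ : (∀ j : Fin d, Fin (a j)), Z.1 β₀ γ₀ * starKron a b T' (γ₀, β)) +
        (∑ j : Fin d, ∑ γ : Fin (a j) × Fin (b j),
          Z.2 j (β j) γ * starKron a b T' (β₀, Function.update β j γ)) = 0 }
    = { Z | ∃ (Θ : ∀ j : Fin d, Fin (b j) → Fin (b j) → ℂ)
          (Y : ∀ j : Fin d, Fin (a j) → Fin (a j) → ℂ),
        (∀ β : ∀ j : Fin d, Fin (b j),
          (∑ j : Fin d, ∑ q : Fin (b j), Θ j (β j) q * T' (Function.update β j q)) = 0) ∧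
        (∀ j : Fin d, k ≤ (j : ℕ) → Y j = 0) ∧
        (∀ β₀ γ₀ : ∀ j : Fin d, Fin (a j),
          Z.1 β₀ γ₀ = ∑ j : Fin d, -(Y j (γ₀ j) (β₀ j)) *
            ∏ j' : Fin d,
              (if j' = j then (1 : ℂ) else if β₀ j' = γ₀ j' then 1 else 0)) ∧
        (∀ (j : Fin d) (p q : Fin (a j) × Fin (b j)),
          Z.2 j p q = (if p.1 = q.1 then Θ j p.2 q.2 else 0)
            + Y j p.1 q.1 * (if p.2 = q.2 then 1 else 0)) } := by
  apply Set.eq_of_subset_of_subset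
  · -- forward inclusion
    intro Z hZ
    simp only [Set.mem_setOf_eq] at hZ ⊢
    have hE : ∀ (β₀ βa : ∀ j : Fin d, Fin (a j)) (βw : ∀ j : Fin d, Fin (b j)),
        Z.1 β₀ βa * T' βw
        + ∑ j : Fin d,
            (∏ j' : Fin d, if j' = j then (1:ℂ) else if βa j' = β₀ j' then 1 else 0)
            * (∑ q : Fin (b j), Z.2 j (βa j, βw j) (β₀ j, q)
                * T' (Function.update βw j q)) = 0 := by
      intro β₀ βa βw
      have h := hZ β₀ (fun j => (βa j, βw j))
      rw [reduce] at h
      exact h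
    have hd0 : 0 < d := lt_of_lt_of_le hk1 hkd
    set r₀ : ∀ j : Fin d, Fin (a j) := fun j => ⟨0, ha j⟩ with hr₀def
    obtain ⟨βs, hβs⟩ : ∃ βv, T' βv ≠ 0 := by
      by_contra h; push_neg at h; exact hT'0 (funext fun x => h x)
    -- star equation
    have hstar : ∀ (βa : ∀ j : Fin d, Fin (a j)) (βw : ∀ j : Fin d, Fin (b j)),
        Z.1 βa βa * T' βw
        + ∑ j : Fin d, (∑ q : Fin (b j), Z.2 j (βa j, βw j) (βa j, q)
            * T' (Function.update βw j q)) = 0 := by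
      intro βa βw
      have h := hE βa βa βw
      have h2 : (∑ j : Fin d, (∏ j' : Fin d, if j' = j then (1:ℂ)
            else if βa j' = βa j' then 1 else 0)
          * (∑ q : Fin (b j), Z.2 j (βa j, βw j) (βa j, q) * T' (Function.update βw j q)))
          = ∑ j : Fin d, (∑ q : Fin (b j), Z.2 j (βa j, βw j) (βa j, q)
              * T' (Function.update βw j q)) := by
        apply Finset.sum_congr rfl
        intro j _
        have h1 : (∏ j' : Fin d, if j' = j then (1:ℂ)
            else if βa j' = βa j' then 1 else 0) = 1 :=
          Finset.prod_eq_one (fun j' _ => by split <;> simp)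
        rw [h1, one_mul]
      rw [h2] at h
      exact h
    -- single-coordinate-off equation
    have hone : ∀ (j : Fin d) (p : Fin (a j)) (βa : ∀ j : Fin d, Fin (a j))
        (βw : ∀ j : Fin d, Fin (b j)), p ≠ βa j →
        Z.1 (Function.update βa j p) βa * T' βw
          + (∑ q : Fin (b j), Z.2 j (βa j, βw j) (p, q) * T' (Function.update βw j q)) = 0 := by
      intro j p βa βw hp
      have h := hE (Function.update βa j p) βa βw
      rw [Finset.sum_eq_single j] at h
      · have h1 : (∏ j' : Fin d, if j' = j then (1:ℂ)
            else if βa j' = (Function.update βa j p) j' then 1 else 0) = 1 := by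
          apply Finset.prod_eq_one; intro j' _
          rcases eq_or_ne j' j with rfl | hne
          · simp
          · simp [hne, Function.update_of_ne hne]
        rw [h1, one_mul] at h
        simp only [Function.update_self] at h
        exact h
      · intro j' _ hj'
        have h0 : (∏ j'' : Fin d, if j'' = j' then (1:ℂ)
            else if βa j'' = (Function.update βa j p) j'' then 1 else 0) = 0 := by
          apply Finset.prod_eq_zero (Finset.mem_univ j)
          rw [if_neg (fun hh => hj' hh.symm), Function.update_self,
            if_neg (fun hh => hp hh.symm)]
        rw [h0, zero_mul]
      · intro hj; exact absurd (Finset.mem_univ j) hj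
    -- Z.1 vanishes at distance ≥ 2
    have hzero2 : ∀ (β₀ γ₀ : ∀ j : Fin d, Fin (a j)) (j₁ j₂ : Fin d), j₁ ≠ j₂ →
        β₀ j₁ ≠ γ₀ j₁ → β₀ j₂ ≠ γ₀ j₂ → Z.1 β₀ γ₀ = 0 := by
      intro β₀ γ₀ j₁ j₂ h12 h1 h2
      have h := hE β₀ γ₀ βs
      have hz : ∀ j : Fin d,
          (∏ j' : Fin d, if j' = j then (1:ℂ) else if γ₀ j' = β₀ j' then 1 else 0) = 0 := by
        intro j
        rcases eq_or_ne j j₁ with rfl | hne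
        · exact Finset.prod_eq_zero (Finset.mem_univ j₂)
            (by rw [if_neg (fun hh => h12 hh.symm), if_neg (fun hh => h2 hh.symm)])
        · exact Finset.prod_eq_zero (Finset.mem_univ j₁)
            (by rw [if_neg (fun hh => hne hh.symm), if_neg (fun hh => h1 hh.symm)])
      simp only [hz, zero_mul, Finset.sum_const_zero, add_zero] at h
      exact (mul_eq_zero.mp h).resolve_right hβs
    -- independence of the base point for distance-1 entries of Z.1
    have hindep : ∀ (j : Fin d) (p : Fin (a j)) (βa βa' : ∀ j' : Fin d, Fin (a j')),
        βa j = βa' j → p ≠ βa j →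
        Z.1 (Function.update βa j p) βa = Z.1 (Function.update βa' j p) βa' := by
      intro j p βa βa' he hp
      have h1 := hone j p βa βs hp
      have h2 := hone j p βa' βs (by rw [← he]; exact hp)
      rw [he] at h1
      have h3 : (Z.1 (Function.update βa j p) βa - Z.1 (Function.update βa' j p) βa') * T' βs
          = 0 := by linear_combination h1 - h2
      exact sub_eq_zero.mp ((mul_eq_zero.mp h3).resolve_right hβs)
    -- difference relation for diagonal updates
    have hmurel : ∀ (j : Fin d) (r : Fin (a j)) (βw : ∀ j' : Fin d, Fin (b j')),
        (Z.1 (Function.update r₀ j r) (Function.update r₀ j r) - Z.1 r₀ r₀) * T' βw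
        + (∑ q : Fin (b j), (Z.2 j (r, βw j) (r, q) - Z.2 j (r₀ j, βw j) (r₀ j, q))
            * T' (Function.update βw j q)) = 0 := by
      intro j r βw
      have h1 := hstar (Function.update r₀ j r) βw
      have h2 := hstar r₀ βw
      have h3 : (∑ j' : Fin d, ∑ q : Fin (b j'),
            Z.2 j' ((Function.update r₀ j r) j', βw j') ((Function.update r₀ j r) j', q)
              * T' (Function.update βw j' q))
          - (∑ j' : Fin d, ∑ q : Fin (b j'),
              Z.2 j' (r₀ j', βw j') (r₀ j', q) * T' (Function.update βw j' q))
          = ∑ q : Fin (b j), (Z.2 j (r, βw j) (r, q) - Z.2 j (r₀ j, βw j) (r₀ j, q))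
              * T' (Function.update βw j q) := by
        rw [← Finset.sum_sub_distrib]
        rw [Finset.sum_eq_single j]
        · simp only [Function.update_self]
          rw [← Finset.sum_sub_distrib]
          apply Finset.sum_congr rfl
          intro q _
          ring
        · intro j' _ hj'
          rw [Function.update_of_ne hj']
          ring
        · intro hj; exact absurd (Finset.mem_univ j) hj
      linear_combination h1 - h2 - h3
    -- diagonal Z.2 entries
    have hdd : ∀ (j : Fin d) (r : Fin (a j)) (s q : Fin (b j)),
        Z.2 j (r, s) (r, q) = Z.2 j (r₀ j, s) (r₀ j, q)
          - (Z.1 (Function.update r₀ j r) (Function.update r₀ j r) - Z.1 r₀ r₀)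
            * (if s = q then 1 else 0) := by
      intro j r s q
      have hc := hT'c j (fun q => Z.2 j (r, s) (r, q) - Z.2 j (r₀ j, s) (r₀ j, q)
          + (Z.1 (Function.update r₀ j r) (Function.update r₀ j r) - Z.1 r₀ r₀)
            * (if s = q then 1 else 0)) ?_
      · have h0 := congrFun hc q
        simp only [Pi.zero_apply] at h0
        linear_combination h0
      · intro βv
        have h := hmurel j r (Function.update βv j s)
        simp only [Function.update_idem, Function.update_self] at h
        have h4 : (∑ q : Fin (b j),
            ((Z.1 (Function.update r₀ j r) (Function.update r₀ j r) - Z.1 r₀ r₀)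
              * (if s = q then 1 else 0)) * T' (Function.update βv j q))
            = (Z.1 (Function.update r₀ j r) (Function.update r₀ j r) - Z.1 r₀ r₀)
              * T' (Function.update βv j s) := by
          have h5 : ∀ q : Fin (b j),
              ((Z.1 (Function.update r₀ j r) (Function.update r₀ j r) - Z.1 r₀ r₀)
                * (if s = q then 1 else 0)) * T' (Function.update βv j q)
              = if s = q then (Z.1 (Function.update r₀ j r) (Function.update r₀ j r)
                  - Z.1 r₀ r₀) * T' (Function.update βv j q) else 0 := by
            intro q; split <;> ring
          simp only [h5]
          rw [Finset.sum_ite_eq, if_pos (Finset.mem_univ s)]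
        have h6 : (∑ q : Fin (b j), (Z.2 j (r, s) (r, q) - Z.2 j (r₀ j, s) (r₀ j, q)
              + (Z.1 (Function.update r₀ j r) (Function.update r₀ j r) - Z.1 r₀ r₀)
                * (if s = q then 1 else 0)) * T' (Function.update βv j q))
            = (∑ q : Fin (b j), (Z.2 j (r, s) (r, q) - Z.2 j (r₀ j, s) (r₀ j, q))
                * T' (Function.update βv j q))
              + (∑ q : Fin (b j),
                ((Z.1 (Function.update r₀ j r) (Function.update r₀ j r) - Z.1 r₀ r₀)
                  * (if s = q then 1 else 0)) * T' (Function.update βv j q)) := by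
          rw [← Finset.sum_add_distrib]
          apply Finset.sum_congr rfl
          intro q _
          ring
        rw [h6, h4]
        linear_combination h
    -- off-diagonal Z.2 entries
    have hoffd : ∀ (j : Fin d) (r p : Fin (a j)) (s q : Fin (b j)), r ≠ p →
        Z.2 j (r, s) (p, q)
          = -Z.1 (Function.update r₀ j p) (Function.update r₀ j r)
            * (if s = q then 1 else 0) := by
      intro j r p s q hrp
      have hc := hT'c j (fun q => Z.2 j (r, s) (p, q)
          + Z.1 (Function.update r₀ j p) (Function.update r₀ j r)
            * (if s = q then 1 else 0)) ?_
      · have h0 := congrFun hc q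
        simp only [Pi.zero_apply] at h0
        linear_combination h0
      · intro βv
        have h := hone j p (Function.update r₀ j r) (Function.update βv j s)
          (by rw [Function.update_self]; exact fun hh => hrp hh.symm)
        simp only [Function.update_idem, Function.update_self] at h
        have h4 : (∑ q : Fin (b j),
            (Z.1 (Function.update r₀ j p) (Function.update r₀ j r)
              * (if s = q then 1 else 0)) * T' (Function.update βv j q))
            = Z.1 (Function.update r₀ j p) (Function.update r₀ j r)
              * T' (Function.update βv j s) := by
          have h5 : ∀ q : Fin (b j),
              (Z.1 (Function.update r₀ j p) (Function.update r₀ j r)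
                * (if s = q then 1 else 0)) * T' (Function.update βv j q)
              = if s = q then Z.1 (Function.update r₀ j p) (Function.update r₀ j r)
                  * T' (Function.update βv j q) else 0 := by
            intro q; split <;> ring
          simp only [h5]
          rw [Finset.sum_ite_eq, if_pos (Finset.mem_univ s)]
        have h6 : (∑ q : Fin (b j), (Z.2 j (r, s) (p, q)
              + Z.1 (Function.update r₀ j p) (Function.update r₀ j r)
                * (if s = q then 1 else 0)) * T' (Function.update βv j q))
            = (∑ q : Fin (b j), Z.2 j (r, s) (p, q) * T' (Function.update βv j q))
              + (∑ q : Fin (b j),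
                (Z.1 (Function.update r₀ j p) (Function.update r₀ j r)
                  * (if s = q then 1 else 0)) * T' (Function.update βv j q)) := by
          rw [← Finset.sum_add_distrib]
          apply Finset.sum_congr rfl
          intro q _
          ring
        rw [h6, h4]
        linear_combination h
    -- one-step diagonal separation
    have hdiagstep : ∀ (γ : ∀ j' : Fin d, Fin (a j')) (j : Fin d) (r : Fin (a j)),
        Z.1 (Function.update γ j r) (Function.update γ j r) - Z.1 γ γ
        = (Z.1 (Function.update r₀ j r) (Function.update r₀ j r) - Z.1 r₀ r₀)
          - (Z.1 (Function.update r₀ j (γ j)) (Function.update r₀ j (γ j)) - Z.1 r₀ r₀) := by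
      intro γ j r
      have h1 := hstar (Function.update γ j r) βs
      have h2 := hstar γ βs
      have h3 : (∑ j' : Fin d, ∑ q : Fin (b j'),
            Z.2 j' ((Function.update γ j r) j', βs j') ((Function.update γ j r) j', q)
              * T' (Function.update βs j' q))
          - (∑ j' : Fin d, ∑ q : Fin (b j'),
              Z.2 j' (γ j', βs j') (γ j', q) * T' (Function.update βs j' q))
          = ∑ q : Fin (b j), (Z.2 j (r, βs j) (r, q) - Z.2 j (γ j, βs j) (γ j, q))
              * T' (Function.update βs j q) := by
        rw [← Finset.sum_sub_distrib]
        rw [Finset.sum_eq_single j]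
        · simp only [Function.update_self]
          rw [← Finset.sum_sub_distrib]
          apply Finset.sum_congr rfl
          intro q _
          ring
        · intro j' _ hj'
          rw [Function.update_of_ne hj']
          ring
        · intro hj; exact absurd (Finset.mem_univ j) hj
      have h4 : (∑ q : Fin (b j), (Z.2 j (r, βs j) (r, q) - Z.2 j (γ j, βs j) (γ j, q))
            * T' (Function.update βs j q))
          = ((Z.1 (Function.update r₀ j (γ j)) (Function.update r₀ j (γ j)) - Z.1 r₀ r₀)
              - (Z.1 (Function.update r₀ j r) (Function.update r₀ j r) - Z.1 r₀ r₀))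
            * T' βs := by
        have h5 : ∀ q : Fin (b j),
            (Z.2 j (r, βs j) (r, q) - Z.2 j (γ j, βs j) (γ j, q))
              * T' (Function.update βs j q)
            = if βs j = q then
                ((Z.1 (Function.update r₀ j (γ j)) (Function.update r₀ j (γ j)) - Z.1 r₀ r₀)
                  - (Z.1 (Function.update r₀ j r) (Function.update r₀ j r) - Z.1 r₀ r₀))
                * T' (Function.update βs j q) else 0 := by
          intro q
          rw [hdd j r (βs j) q, hdd j (γ j) (βs j) q]
          split <;> ring
        simp only [h5]
        rw [Finset.sum_ite_eq, if_pos (Finset.mem_univ (βs j)), Function.update_eq_self]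
      have h7 : (Z.1 (Function.update γ j r) (Function.update γ j r) - Z.1 γ γ
          - ((Z.1 (Function.update r₀ j r) (Function.update r₀ j r) - Z.1 r₀ r₀)
            - (Z.1 (Function.update r₀ j (γ j)) (Function.update r₀ j (γ j)) - Z.1 r₀ r₀)))
          * T' βs = 0 := by
        linear_combination h1 - h2 - h3 - h4
      exact sub_eq_zero.mp ((mul_eq_zero.mp h7).resolve_right hβs)
    -- full diagonal separation
    have hdiagsep : ∀ γ : (∀ j' : Fin d, Fin (a j')),
        Z.1 γ γ = Z.1 r₀ r₀
          + ∑ j : Fin d, (Z.1 (Function.update r₀ j (γ j)) (Function.update r₀ j (γ j))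
              - Z.1 r₀ r₀) := by
      intro γ
      have hF := const_of_update (fun γ => Z.1 γ γ
          - ∑ j : Fin d, (Z.1 (Function.update r₀ j (γ j)) (Function.update r₀ j (γ j))
              - Z.1 r₀ r₀)) ?_ γ r₀
      · have h0 : ∀ j : Fin d, Function.update r₀ j (r₀ j) = r₀ :=
          fun j => Function.update_eq_self j r₀
        simp only [h0, sub_self, Finset.sum_const_zero] at hF
        linear_combination hF
      · intro γ' j r
        beta_reduce
        have ha1 := hdiagstep γ' j r
        have ha2 : (∑ j' : Fin d,
              (Z.1 (Function.update r₀ j' ((Function.update γ' j r) j'))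
                (Function.update r₀ j' ((Function.update γ' j r) j')) - Z.1 r₀ r₀))
            - (∑ j' : Fin d,
              (Z.1 (Function.update r₀ j' (γ' j')) (Function.update r₀ j' (γ' j'))
                - Z.1 r₀ r₀))
            = (Z.1 (Function.update r₀ j r) (Function.update r₀ j r) - Z.1 r₀ r₀)
              - (Z.1 (Function.update r₀ j (γ' j)) (Function.update r₀ j (γ' j))
                - Z.1 r₀ r₀) := by
          rw [← Finset.sum_sub_distrib]
          rw [Finset.sum_eq_single j]
          · rw [Function.update_self]
          · intro j' _ hj'
            rw [Function.update_of_ne hj']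
            ring
          · intro hj; exact absurd (Finset.mem_univ j) hj
        linear_combination ha1 - ha2
    -- sum of the gauge corrections
    have hsum_t : (∑ j : Fin d, if (j : ℕ) = 0 then Z.1 r₀ r₀ else 0) = Z.1 r₀ r₀ := by
      rw [Finset.sum_eq_single (⟨0, hd0⟩ : Fin d)]
      · simp
      · intro j _ hj
        rw [if_neg (fun h => hj (Fin.ext h))]
      · intro h; exact absurd (Finset.mem_univ _) h
    refine ⟨fun j s q => Z.2 j (r₀ j, s) (r₀ j, q)
        + (if (j : ℕ) = 0 then Z.1 r₀ r₀ else 0) * (if s = q then 1 else 0),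
      fun j r p => if r = p
        then (-(Z.1 (Function.update r₀ j r) (Function.update r₀ j r) - Z.1 r₀ r₀)
          - (if (j : ℕ) = 0 then Z.1 r₀ r₀ else 0))
        else -Z.1 (Function.update r₀ j p) (Function.update r₀ j r),
      ?_, ?_, ?_, ?_⟩
    · -- annihilator property
      intro βv
      have h1 := hstar r₀ βv
      have h2 : ∀ j : Fin d, (∑ q : Fin (b j),
          ((if (j:ℕ) = 0 then Z.1 r₀ r₀ else 0) * (if βv j = q then 1 else 0))
            * T' (Function.update βv j q))
          = (if (j:ℕ) = 0 then Z.1 r₀ r₀ else 0) * T' βv := by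
        intro j
        have h5 : ∀ q : Fin (b j),
            ((if (j:ℕ) = 0 then Z.1 r₀ r₀ else 0) * (if βv j = q then 1 else 0))
              * T' (Function.update βv j q)
            = if βv j = q then (if (j:ℕ) = 0 then Z.1 r₀ r₀ else 0)
                * T' (Function.update βv j q) else 0 := by
          intro q; by_cases h : βv j = q <;> simp [h]
        simp only [h5]
        rw [Finset.sum_ite_eq, if_pos (Finset.mem_univ _), Function.update_eq_self]
      have h3 : (∑ j : Fin d, ∑ q : Fin (b j),
          (Z.2 j (r₀ j, βv j) (r₀ j, q)
            + (if (j:ℕ) = 0 then Z.1 r₀ r₀ else 0) * (if βv j = q then 1 else 0))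
            * T' (Function.update βv j q))
          = (∑ j : Fin d, ∑ q : Fin (b j),
              Z.2 j (r₀ j, βv j) (r₀ j, q) * T' (Function.update βv j q))
            + ∑ j : Fin d, (if (j:ℕ) = 0 then Z.1 r₀ r₀ else 0) * T' βv := by
        rw [← Finset.sum_add_distrib]
        apply Finset.sum_congr rfl
        intro j _
        rw [← h2 j, ← Finset.sum_add_distrib]
        apply Finset.sum_congr rfl
        intro q _
        ring
      show (∑ j : Fin d, ∑ q : Fin (b j),
          (Z.2 j (r₀ j, βv j) (r₀ j, q)
            + (if (j:ℕ) = 0 then Z.1 r₀ r₀ else 0) * (if βv j = q then 1 else 0))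
            * T' (Function.update βv j q)) = 0
      rw [h3, ← Finset.sum_mul, hsum_t]
      linear_combination h1
    · -- Y vanishes for j ≥ k
      intro j hj
      funext r p
      have haj := hak j hj
      have hr2 := r.2
      have hp2 := p.2
      have hrp : r = p := Fin.ext (by omega)
      subst hrp
      have hjk : ¬((j:ℕ) = 0) := by omega
      have hr0 : r = r₀ j := by
        apply Fin.ext
        show (r : ℕ) = 0
        omega
      show (if r = r
        then (-(Z.1 (Function.update r₀ j r) (Function.update r₀ j r) - Z.1 r₀ r₀)
          - (if (j : ℕ) = 0 then Z.1 r₀ r₀ else 0))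
        else -Z.1 (Function.update r₀ j r) (Function.update r₀ j r)) = 0
      rw [if_pos rfl, if_neg hjk, hr0, Function.update_eq_self]
      ring
    · -- Z.1 formula
      intro β₀ γ₀
      by_cases hbg : β₀ = γ₀
      · subst hbg
        have hsum : (∑ j : Fin d, -(if β₀ j = β₀ j
              then (-(Z.1 (Function.update r₀ j (β₀ j)) (Function.update r₀ j (β₀ j))
                  - Z.1 r₀ r₀) - (if (j:ℕ) = 0 then Z.1 r₀ r₀ else 0))
              else -Z.1 (Function.update r₀ j (β₀ j)) (Function.update r₀ j (β₀ j)))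
            * (∏ j' : Fin d, if j' = j then (1:ℂ) else if β₀ j' = β₀ j' then 1 else 0))
            = (∑ j : Fin d, (Z.1 (Function.update r₀ j (β₀ j))
                (Function.update r₀ j (β₀ j)) - Z.1 r₀ r₀))
              + ∑ j : Fin d, (if (j:ℕ) = 0 then Z.1 r₀ r₀ else 0) := by
          rw [← Finset.sum_add_distrib]
          apply Finset.sum_congr rfl
          intro j _
          have hprod1 : (∏ j' : Fin d, if j' = j then (1:ℂ)
              else if β₀ j' = β₀ j' then 1 else 0) = 1 :=
            Finset.prod_eq_one (fun j' _ => by split <;> simp)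
          rw [hprod1, if_pos rfl]
          ring
        rw [hsum, hsum_t]
        linear_combination hdiagsep β₀
      · obtain ⟨j₁, hj₁⟩ := Function.ne_iff.mp hbg
        by_cases h2 : ∀ j', j' ≠ j₁ → β₀ j' = γ₀ j'
        · -- distance exactly 1
          have hb : β₀ = Function.update γ₀ j₁ (β₀ j₁) := by
            funext j'
            rcases eq_or_ne j' j₁ with rfl | hne
            · rw [Function.update_self]
            · rw [Function.update_of_ne hne]; exact h2 j' hne
          have hL : Z.1 β₀ γ₀ = Z.1 (Function.update r₀ j₁ (β₀ j₁))
              (Function.update r₀ j₁ (γ₀ j₁)) := by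
            conv_lhs => rw [hb]
            rw [hindep j₁ (β₀ j₁) γ₀ (Function.update r₀ j₁ (γ₀ j₁))
              (by rw [Function.update_self]) hj₁]
            rw [Function.update_idem]
          rw [hL, Finset.sum_eq_single j₁]
          · have hp1 : (∏ j' : Fin d, if j' = j₁ then (1:ℂ)
                else if β₀ j' = γ₀ j' then 1 else 0) = 1 :=
              Finset.prod_eq_one (fun j' _ => by
                rcases eq_or_ne j' j₁ with rfl | hne
                · simp
                · rw [if_neg hne, if_pos (h2 j' hne)])
            beta_reduce
            rw [hp1, mul_one, if_neg (fun hh => hj₁ hh.symm)]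
            ring
          · intro j' _ hj'
            have hp0 : (∏ j'' : Fin d, if j'' = j' then (1:ℂ)
                else if β₀ j'' = γ₀ j'' then 1 else 0) = 0 :=
              Finset.prod_eq_zero (Finset.mem_univ j₁)
                (by rw [if_neg (fun hh => hj' hh.symm), if_neg hj₁])
            rw [hp0, mul_zero]
          · intro h; exact absurd (Finset.mem_univ _) h
        · -- distance at least 2
          push_neg at h2
          obtain ⟨j₂, hj₂ne, hj₂⟩ := h2
          rw [hzero2 β₀ γ₀ j₁ j₂ (fun hh => hj₂ne hh.symm) hj₁ hj₂]
          symm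
          apply Finset.sum_eq_zero
          intro j _
          rcases eq_or_ne j j₁ with rfl | hne
          · rw [Finset.prod_eq_zero (Finset.mem_univ j₂)
              (by rw [if_neg hj₂ne, if_neg hj₂]), mul_zero]
          · rw [Finset.prod_eq_zero (Finset.mem_univ j₁)
              (by rw [if_neg (fun hh => hne hh.symm), if_neg hj₁]), mul_zero]
    · -- Z.2 formula
      intro j p q
      obtain ⟨r, s⟩ := p
      obtain ⟨p1, q2⟩ := q
      by_cases hrp : r = p1
      · subst hrp
        show Z.2 j (r, s) (r, q2)
          = (if r = r then Z.2 j (r₀ j, s) (r₀ j, q2)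
              + (if (j : ℕ) = 0 then Z.1 r₀ r₀ else 0) * (if s = q2 then 1 else 0) else 0)
            + (if r = r
                then (-(Z.1 (Function.update r₀ j r) (Function.update r₀ j r) - Z.1 r₀ r₀)
                  - (if (j : ℕ) = 0 then Z.1 r₀ r₀ else 0))
                else -Z.1 (Function.update r₀ j r) (Function.update r₀ j r))
              * (if s = q2 then 1 else 0)
        rw [hdd j r s q2, if_pos rfl, if_pos rfl]
        ring
      · show Z.2 j (r, s) (p1, q2)
          = (if r = p1 then Z.2 j (r₀ j, s) (r₀ j, q2)
              + (if (j : ℕ) = 0 then Z.1 r₀ r₀ else 0) * (if s = q2 then 1 else 0) else 0)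
            + (if r = p1
                then (-(Z.1 (Function.update r₀ j r) (Function.update r₀ j r) - Z.1 r₀ r₀)
                  - (if (j : ℕ) = 0 then Z.1 r₀ r₀ else 0))
                else -Z.1 (Function.update r₀ j p1) (Function.update r₀ j r))
              * (if s = q2 then 1 else 0)
        rw [hoffd j r p1 s q2 hrp, if_neg hrp, if_neg hrp]
        ring
  · -- backward inclusion
    intro Z hZ
    simp only [Set.mem_setOf_eq] at hZ ⊢
    obtain ⟨Θ, Y, hΘ, hYk, hZ1, hZ2⟩ := hZ
    intro β₀ β
    rw [reduce]
    set β₂ : ∀ j : Fin d, Fin (b j) := fun j => (β j).2 with hβ₂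
    have hQ : ∀ j : Fin d, (∑ q : Fin (b j), Z.2 j (β j) (β₀ j, q)
          * T' (Function.update β₂ j q))
        = (if (β j).1 = β₀ j then
            (∑ q : Fin (b j), Θ j (β j).2 q * T' (Function.update β₂ j q)) else 0)
          + Y j (β j).1 (β₀ j) * T' β₂ := by
      intro j
      have hupd : Function.update β₂ j ((β j).2) = β₂ := Function.update_eq_self j β₂
      simp only [hZ2, add_mul]
      rw [Finset.sum_add_distrib]
      congr 1
      · by_cases h : (β j).1 = β₀ j
        · simp [h]
        · simp [h]
      · simp only [mul_assoc, ite_mul, one_mul, zero_mul, mul_ite, mul_zero]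
        rw [Finset.sum_ite_eq, if_pos (Finset.mem_univ _), hupd]
    rw [hZ1]
    have hPP : ∀ j : Fin d,
        (∏ j' : Fin d, (if j' = j then (1 : ℂ) else if β₀ j' = (β j').1 then 1 else 0))
        = ∏ j' : Fin d, (if j' = j then (1:ℂ) else if (β j').1 = β₀ j' then 1 else 0) := by
      intro j
      apply Finset.prod_congr rfl
      intro j' _
      rcases eq_or_ne j' j with rfl | hne
      · simp
      · rw [if_neg hne, if_neg hne]
        by_cases h : β₀ j' = (β j').1
        · rw [if_pos h, if_pos h.symm]
        · rw [if_neg h, if_neg (fun hh => h hh.symm)]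
    simp only [hPP, hQ]
    rw [Finset.sum_mul, ← Finset.sum_add_distrib]
    have key : ∀ j : Fin d,
        -Y j ((β j).1) (β₀ j) *
          (∏ j' : Fin d, (if j' = j then (1:ℂ) else if (β j').1 = β₀ j' then 1 else 0)) * T' β₂
        + (∏ j' : Fin d, (if j' = j then (1:ℂ) else if (β j').1 = β₀ j' then 1 else 0))
          * ((if (β j).1 = β₀ j then
              (∑ q : Fin (b j), Θ j (β j).2 q * T' (Function.update β₂ j q)) else 0)
            + Y j (β j).1 (β₀ j) * T' β₂)
        = (∏ j' : Fin d, (if (β j').1 = β₀ j' then (1:ℂ) else 0))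
          * (∑ q : Fin (b j), Θ j (β j).2 q * T' (Function.update β₂ j q)) := by
      intro j
      have hR : (∏ j' : Fin d, (if (β j').1 = β₀ j' then (1:ℂ) else 0))
          = (if (β j).1 = β₀ j then (1:ℂ) else 0)
            * ∏ j' : Fin d, (if j' = j then (1:ℂ) else if (β j').1 = β₀ j' then 1 else 0) := by
        rw [prod_extract (fun j' => if (β j').1 = β₀ j' then (1:ℂ) else 0) j]
      rw [hR]
      by_cases h : (β j).1 = β₀ j
      · rw [if_pos h, if_pos h]; ring
      · rw [if_neg h, if_neg h]; ring
    simp only [key]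
    rw [← Finset.mul_sum]
    have : (∑ j : Fin d, ∑ q : Fin (b j), Θ j (β j).2 q * T' (Function.update β₂ j q)) = 0 := hΘ β₂
    rw [this, mul_zero]
end

section
/- Let V_1,…,V_d and W_1,…,W_d be finite-dimensional complex vector spaces, let T ∈ V_1⊗⋯⊗V_d and S ∈ W_1⊗⋯⊗W_d be concise tensors, and assume that the annihilator of T under the Leibniz action consists exactly of the traceless scalar tuples: ann(T) = { (x_1·Id_{V_1},…,x_d·Id_{V_d}) : x_1+⋯+x_d = 0 }. Let T⊠S ∈ (V_1⊗W_1)⊗⋯⊗(V_d⊗W_d) denote the Kronecker product, i.e. the image of T⊗S under the canonical regrouping isomorphism (V_1⊗⋯⊗V_d)⊗(W_1⊗⋯⊗W_d) ≅ (V_1⊗W_1)⊗⋯⊗(V_d⊗W_d). Then ann(T⊠S) = { (Id_{V_1}⊗Z_1, …, Id_{V_d}⊗Z_d) : (Z_1,…,Z_d) ∈ ann(S) }. -/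
open scoped BigOperators

/-- The Kronecker product `T ⊠ S ∈ (V_1⊗W_1)⊗⋯⊗(V_d⊗W_d)`, in coordinates. -/
def kron {d : ℕ} {a b : Fin d → ℕ} (T : (∀ j : Fin d, Fin (a j)) → ℂ)
    (S : (∀ j : Fin d, Fin (b j)) → ℂ) : (∀ j : Fin d, Fin (a j) × Fin (b j)) → ℂ :=
  fun β => T (fun j => (β j).1) * S fun j => (β j).2

/-- The annihilator of a tensor under the Leibniz action, in coordinates: the set of
tuples of matrices `X = (X_1,…,X_d)` with `Σ_j (Id⊗⋯⊗X_j⊗⋯⊗Id)(T) = 0`. -/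
def leibAnn {d : ℕ} {ι : Fin d → Type} [∀ j, Fintype (ι j)]
    (T : (∀ j : Fin d, ι j) → ℂ) :
    Set (∀ j : Fin d, ι j → ι j → ℂ) :=
  { X | ∀ β : ∀ j : Fin d, ι j,
      (∑ j : Fin d, ∑ γ : ι j, X j (β j) γ * T (Function.update β j γ)) = 0 }

lemma update_fst {d : ℕ} {a b : Fin d → ℕ} (β : ∀ j : Fin d, Fin (a j) × Fin (b j))
    (j : Fin d) (γ : Fin (a j) × Fin (b j)) :
    (fun k => (Function.update β j γ k).1) = Function.update (fun k => (β k).1) j γ.1 := by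
  funext k
  rcases eq_or_ne k j with rfl | h
  · simp
  · simp [Function.update_of_ne h]

lemma update_snd {d : ℕ} {a b : Fin d → ℕ} (β : ∀ j : Fin d, Fin (a j) × Fin (b j))
    (j : Fin d) (γ : Fin (a j) × Fin (b j)) :
    (fun k => (Function.update β j γ k).2) = Function.update (fun k => (β k).2) j γ.2 := by
  funext k
  rcases eq_or_ne k j with rfl | h
  · simp
  · simp [Function.update_of_ne h]

/-- Proposition: if `T` and `S` are concise and the annihilator of `T` consists exactly
of the traceless scalar tuples, then
`ann(T ⊠ S) = { (Id_{V_1}⊗Z_1, …, Id_{V_d}⊗Z_d) : (Z_1,…,Z_d) ∈ ann(S) }`. -/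
theorem ann_kron {d : ℕ} (a b : Fin d → ℕ)
    (T : (∀ j : Fin d, Fin (a j)) → ℂ) (S : (∀ j : Fin d, Fin (b j)) → ℂ)
    (hT : Concise T) (hS : Concise S)
    (hannT : leibAnn T
      = { X | ∃ x : Fin d → ℂ, (∑ j : Fin d, x j) = 0 ∧
          ∀ (j : Fin d) (p q : Fin (a j)),
            X j p q = x j * (if p = q then 1 else 0) }) :
    leibAnn (kron T S)
      = { Z | ∃ W ∈ leibAnn S,
          ∀ (j : Fin d) (p q : Fin (a j) × Fin (b j)),
            Z j p q = (if p.1 = q.1 then (1 : ℂ) else 0) * W j p.2 q.2 } := by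
  classical
  by_cases ha : ∀ j, 0 < a j
  · ext Z
    simp only [leibAnn, Set.mem_setOf_eq]
    constructor
    · intro hZ
      -- contract `Z` with `S` along a fixed δ : this lands in `ann(T)`
      have memT : ∀ δ : ∀ j : Fin d, Fin (b j), ∀ α : ∀ j : Fin d, Fin (a j),
          (∑ j : Fin d, ∑ γ1 : Fin (a j),
            (∑ γ2 : Fin (b j), Z j (α j, δ j) (γ1, γ2) * S (Function.update δ j γ2))
              * T (Function.update α j γ1)) = 0 := by
        intro δ α
        have h0 := hZ (fun k => (α k, δ k))
        simp only [kron, Fintype.sum_prod_type] at h0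
        calc ∑ j : Fin d, ∑ γ1 : Fin (a j),
              (∑ γ2 : Fin (b j), Z j (α j, δ j) (γ1, γ2) * S (Function.update δ j γ2))
                * T (Function.update α j γ1)
            = ∑ j : Fin d, ∑ γ1 : Fin (a j), ∑ γ2 : Fin (b j),
              Z j (α j, δ j) (γ1, γ2) *
                (T (Function.update α j γ1) * S (Function.update δ j γ2)) := by
              refine Finset.sum_congr rfl fun j _ => Finset.sum_congr rfl fun γ1 _ => ?_
              rw [Finset.sum_mul]
              exact Finset.sum_congr rfl fun γ2 _ => by ring
          _ = 0 := by
              rw [← h0]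
              refine Finset.sum_congr rfl fun j _ => Finset.sum_congr rfl fun γ1 _ =>
                Finset.sum_congr rfl fun γ2 _ => ?_
              rw [update_fst (fun k => (α k, δ k)) j (γ1, γ2),
                update_snd (fun k => (α k, δ k)) j (γ1, γ2)]
      have hx : ∀ δ : ∀ j : Fin d, Fin (b j), ∃ x : Fin d → ℂ,
          (∑ j : Fin d, x j) = 0 ∧ ∀ (j : Fin d) (p q : Fin (a j)),
            (∑ γ2 : Fin (b j), Z j (p, δ j) (q, γ2) * S (Function.update δ j γ2))
              = x j * (if p = q then 1 else 0) := by
        intro δ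
        have hmem : (fun j p γ1 =>
            ∑ γ2 : Fin (b j), Z j (p, δ j) (γ1, γ2) * S (Function.update δ j γ2))
              ∈ leibAnn T := by
          simp only [leibAnn, Set.mem_setOf_eq]
          intro α
          exact memT δ α
        rw [hannT] at hmem
        obtain ⟨x, h1, h2⟩ := hmem
        exact ⟨x, h1, fun j p q => by simpa using h2 j p q⟩
      choose x hx0 hxe using hx
      have offdiag : ∀ (j : Fin d) (p1 q1 : Fin (a j)), p1 ≠ q1 →
          ∀ (p2 q2 : Fin (b j)), Z j (p1, p2) (q1, q2) = 0 := by
        intro j p1 q1 hne p2 q2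
        have hc := hS j (fun γ2 => Z j (p1, p2) (q1, γ2)) ?_
        · exact congrFun hc q2
        · intro β
          have h := hxe (Function.update β j p2) j p1 q1
          rw [if_neg hne, mul_zero] at h
          simpa only [Function.update_self, Function.update_idem] using h
      have diag : ∀ (j : Fin d) (p1 q1 : Fin (a j)) (p2 q2 : Fin (b j)),
          Z j (p1, p2) (p1, q2) = Z j (q1, p2) (q1, q2) := by
        intro j p1 q1 p2 q2
        have hc := hS j (fun γ2 => Z j (p1, p2) (p1, γ2) - Z j (q1, p2) (q1, γ2)) ?_
        · have := congrFun hc q2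
          simpa [sub_eq_zero] using this
        · intro β
          have h1 := hxe (Function.update β j p2) j p1 p1
          have h2 := hxe (Function.update β j p2) j q1 q1
          simp only [if_pos rfl, mul_one, Function.update_self, Function.update_idem]
            at h1 h2
          simp only [sub_mul, Finset.sum_sub_distrib, h1, h2, sub_self]
      have p0 : ∀ j, Fin (a j) := fun j => ⟨0, ha j⟩
      refine ⟨fun j p2 q2 => Z j (p0 j, p2) (p0 j, q2), ?_, ?_⟩
      · simp only [leibAnn, Set.mem_setOf_eq]
        intro δ
        calc ∑ j : Fin d, ∑ γ2 : Fin (b j),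
              Z j (p0 j, δ j) (p0 j, γ2) * S (Function.update δ j γ2)
            = ∑ j : Fin d, x δ j := by
              refine Finset.sum_congr rfl fun j _ => ?_
              simpa using hxe δ j (p0 j) (p0 j)
          _ = 0 := hx0 δ
      · intro j p q
        rcases p with ⟨p1, p2⟩
        rcases q with ⟨q1, q2⟩
        by_cases h : p1 = q1
        · subst h
          simpa using diag j p1 (p0 j) p2 q2
        · simp only [if_neg h, zero_mul]
          exact offdiag j p1 q1 h p2 q2
    · rintro ⟨W, hW, hform⟩ β
      have hj : ∀ j : Fin d,
          (∑ γ : Fin (a j) × Fin (b j), Z j (β j) γ * kron T S (Function.update β j γ))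
            = T (fun k => (β k).1) *
              ∑ γ2 : Fin (b j), W j ((fun k => (β k).2) j) γ2 *
                S (Function.update (fun k => (β k).2) j γ2) := by
        intro j
        simp only [kron, Fintype.sum_prod_type]
        have hterm : ∀ (γ1 : Fin (a j)) (γ2 : Fin (b j)),
            Z j (β j) (γ1, γ2) *
              (T (fun k => (Function.update β j (γ1, γ2) k).1) *
                S (fun k => (Function.update β j (γ1, γ2) k).2))
              = (if (β j).1 = γ1 then 1 else 0) *
                  (W j (β j).2 γ2 * (T (Function.update (fun k => (β k).1) j γ1) *
                    S (Function.update (fun k => (β k).2) j γ2))) := by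
          intro γ1 γ2
          rw [update_fst β j (γ1, γ2), update_snd β j (γ1, γ2), hform j (β j) (γ1, γ2)]
          ring
        simp only [hterm, ite_mul, one_mul, zero_mul]
        have hswap : ∀ γ1 : Fin (a j),
            (∑ γ2 : Fin (b j), if (β j).1 = γ1 then
                W j (β j).2 γ2 * (T (Function.update (fun k => (β k).1) j γ1) *
                  S (Function.update (fun k => (β k).2) j γ2)) else 0)
            = if (β j).1 = γ1 then
                ∑ γ2 : Fin (b j), W j (β j).2 γ2 *
                  (T (Function.update (fun k => (β k).1) j γ1) *
                    S (Function.update (fun k => (β k).2) j γ2)) else 0 := by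
          intro γ1
          split_ifs <;> simp
        simp only [hswap, Finset.sum_ite_eq, Finset.mem_univ, if_true]
        rw [show Function.update (fun k => (β k).1) j ((β j).1) = fun k => (β k).1 from
          Function.update_eq_self j _]
        rw [Finset.mul_sum]
        exact Finset.sum_congr rfl fun γ2 _ => by ring
      calc ∑ j : Fin d, ∑ γ : Fin (a j) × Fin (b j),
            Z j (β j) γ * kron T S (Function.update β j γ)
          = ∑ j : Fin d, T (fun k => (β k).1) *
              ∑ γ2 : Fin (b j), W j ((fun k => (β k).2) j) γ2 *
                S (Function.update (fun k => (β k).2) j γ2) :=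
            Finset.sum_congr rfl fun j _ => hj j
        _ = T (fun k => (β k).1) *
            ∑ j : Fin d, ∑ γ2 : Fin (b j), W j ((fun k => (β k).2) j) γ2 *
                S (Function.update (fun k => (β k).2) j γ2) := by rw [Finset.mul_sum]
        _ = 0 := by rw [hW (fun k => (β k).2), mul_zero]
  · -- degenerate case: some `a j = 0`, hence by conciseness of `T` all `a j = 0`
    push_neg at ha
    obtain ⟨j0, hj0⟩ := ha
    have hj0' : a j0 = 0 := Nat.le_zero.mp hj0
    have hall : ∀ i, a i = 0 := by
      intro i
      by_contra hi
      have h1 : (fun _ : Fin (a i) => (1 : ℂ)) = 0 := by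
        refine hT i _ fun β => ?_
        exact absurd (β j0).2 (by omega)
      have := congrFun h1 ⟨0, Nat.pos_of_ne_zero hi⟩
      simp at this
    ext Z
    simp only [leibAnn, Set.mem_setOf_eq]
    constructor
    · intro _
      refine ⟨fun j _ _ => 0, fun δ => by simp, fun j p q => ?_⟩
      exact absurd p.1.2 (by have := hall j; omega)
    · intro _ β
      exact absurd (β j0).1.2 (by omega)
end

section
/- Let V_1,…,V_d be finite-dimensional complex vector spaces and let V′_i ⊆ V_i be subspaces. Let T ∈ V′_1⊗⋯⊗V′_d ⊆ V_1⊗⋯⊗V_d be a tensor that is concise as an element of V′_1⊗⋯⊗V′_d. Then a tuple (X_1,…,X_d) ∈ End(V_1)⊕⋯⊕End(V_d) annihilates T under the Leibniz action if and only if X_i(V′_i) ⊆ V′_i for every i and the tuple of restrictions (X_1|_{V′_1},…,X_d|_{V′_d}) ∈ End(V′_1)⊕⋯⊕End(V′_d) annihilates T, viewed as an element of V′_1⊗⋯⊗V′_d. (Equivalently, fixing complements C_i with V_i = V′_i ⊕ C_i, the annihilator of T in End(V_1)⊕⋯⊕End(V_d) is the direct sum of the annihilator of T in End(V′_1)⊕⋯⊕End(V′_d),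 extended by zero on the C_i, and the subspace of tuples whose components vanish identically on V′_i.) -/
open scoped TensorProduct

/-- The Leibniz action of a tuple of endomorphisms `(X_1,…,X_d)` on `⨂ᵢ Vᵢ`:
`X.T = Σ_i (Id⊗⋯⊗X_i⊗⋯⊗Id)(T)`. -/
noncomputable def leibMap {d : ℕ} {V : Fin d → Type*} [∀ i, AddCommGroup (V i)]
    [∀ i, Module ℂ (V i)] (X : ∀ i, V i →ₗ[ℂ] V i) :
    (⨂[ℂ] i, V i) →ₗ[ℂ] ⨂[ℂ] i, V i :=
  ∑ i : Fin d,
    PiTensorProduct.map (Function.update (fun j => (LinearMap.id : V j →ₗ[ℂ] V j)) i (X i))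

/-- Conciseness of a tensor `T ∈ ⨂ᵢ Vᵢ` (of finite-dimensional spaces): any functional
`φ` on the `i`-th factor such that every full contraction of `T` using `φ` in slot `i`
vanishes must be zero; equivalently, every flattening map `Vᵢ* → ⨂_{j≠i} Vⱼ` is
injective. -/
def PiConcise {d : ℕ} {V : Fin d → Type*} [∀ i, AddCommGroup (V i)]
    [∀ i, Module ℂ (V i)] (T : ⨂[ℂ] i, V i) : Prop :=
  ∀ (i : Fin d) (φ : V i →ₗ[ℂ] ℂ),
    (∀ χ : ∀ j, V j →ₗ[ℂ] ℂ, χ i = φ →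
      PiTensorProduct.lift
        ((MultilinearMap.mkPiAlgebra ℂ (Fin d) ℂ).compLinearMap χ) T = 0) → φ = 0

-- auxiliary: compLinearMap composition
lemma compLinearMap_compLinearMap {d : ℕ} {V W U : Fin d → Type*}
    [∀ i, AddCommGroup (V i)] [∀ i, Module ℂ (V i)]
    [∀ i, AddCommGroup (W i)] [∀ i, Module ℂ (W i)]
    [∀ i, AddCommGroup (U i)] [∀ i, Module ℂ (U i)]
    (F : MultilinearMap ℂ U ℂ) (f : ∀ i, W i →ₗ[ℂ] U i) (g : ∀ i, V i →ₗ[ℂ] W i) :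
    (F.compLinearMap f).compLinearMap g = F.compLinearMap (fun i => (f i).comp (g i)) := by
  ext v
  simp [MultilinearMap.compLinearMap_apply]

-- naturality of leibMap
lemma leib_natural {d : ℕ} {W V : Fin d → Type*}
    [∀ i, AddCommGroup (W i)] [∀ i, Module ℂ (W i)]
    [∀ i, AddCommGroup (V i)] [∀ i, Module ℂ (V i)]
    (ι : ∀ i, W i →ₗ[ℂ] V i) (X : ∀ i, V i →ₗ[ℂ] V i) (X' : ∀ i, W i →ₗ[ℂ] W i)
    (hc : ∀ i, (X i).comp (ι i) = (ι i).comp (X' i)) (t : ⨂[ℂ] i, W i) :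
    PiTensorProduct.map ι (leibMap X' t) = leibMap X (PiTensorProduct.map ι t) := by
  classical
  simp only [leibMap, LinearMap.sum_apply, map_sum]
  refine Finset.sum_congr rfl fun k _ => ?_
  have h1 : (PiTensorProduct.map ι).comp
      (PiTensorProduct.map (Function.update (fun j => (LinearMap.id : W j →ₗ[ℂ] W j)) k (X' k)))
      = (PiTensorProduct.map (Function.update (fun j => (LinearMap.id : V j →ₗ[ℂ] V j)) k (X k))).comp
        (PiTensorProduct.map ι) := by
    rw [← PiTensorProduct.map_comp, ← PiTensorProduct.map_comp]
    congr 1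
    funext j
    by_cases hj : j = k
    · subst hj
      simp [Function.update_self, hc j]
    · simp [Function.update_of_ne hj]
  exact LinearMap.congr_fun h1 t

/-- Lemma (annihilator of a non-concise tensor): let `V′ᵢ ⊆ Vᵢ` be subspaces and let
`T′ ∈ ⨂ᵢ V′ᵢ` be concise, with image `T ∈ ⨂ᵢ Vᵢ`.  A tuple `(X_1,…,X_d)` of
endomorphisms of the `Vᵢ` annihilates `T` under the Leibniz action if and only if each
`Xᵢ` preserves `V′ᵢ` and the tuple of restrictions annihilates `T′`. -/
theorem ann_of_nonconcise {d : ℕ} {V : Fin d → Type*} [∀ i, AddCommGroup (V i)]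
    [∀ i, Module ℂ (V i)] [∀ i, FiniteDimensional ℂ (V i)]
    (V' : ∀ i, Submodule ℂ (V i)) (T' : ⨂[ℂ] i, (V' i : Type _))
    (hT'c : PiConcise T')
    (X : ∀ i, V i →ₗ[ℂ] V i) :
    leibMap X (PiTensorProduct.map (fun i => (V' i).subtype) T') = 0 ↔
      ∃ X' : ∀ i, (V' i : Type _) →ₗ[ℂ] (V' i : Type _),
        (∀ (i : Fin d) (w : V' i), X i (w : V i) = ((X' i w : V' i) : V i)) ∧
        leibMap X' T' = 0 := by
  classical
  -- projections
  have hpex : ∀ j, ∃ p : V j →ₗ[ℂ] (V' j : Type _),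
      p.comp (V' j).subtype = LinearMap.id :=
    fun j => (V' j).subtype.exists_leftInverse_of_injective (V' j).ker_subtype
  choose p hp using hpex
  constructor
  · intro h
    -- Step 1: each X i preserves V' i
    have hpres : ∀ (i : Fin d), ∀ w ∈ V' i, X i w ∈ V' i := by
      intro i w hw
      rw [← Subspace.forall_mem_dualAnnihilator_apply_eq_zero_iff (V' i)]
      intro φ hφ
      rw [Submodule.mem_dualAnnihilator] at hφ
      have hψ : ((φ.comp (X i)).comp (V' i).subtype) = 0 := by
        apply hT'c i
        intro χ hχ
        set η : ∀ j, V j →ₗ[ℂ] ℂ :=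
          Function.update (fun j => (χ j).comp (p j)) i φ with hη
        have h0 := congrArg (PiTensorProduct.lift
          ((MultilinearMap.mkPiAlgebra ℂ (Fin d) ℂ).compLinearMap η)) h
        rw [map_zero] at h0
        rw [leibMap, LinearMap.sum_apply, map_sum] at h0
        -- rewrite each term as contraction of T'
        have hterm : ∀ k : Fin d,
            PiTensorProduct.lift ((MultilinearMap.mkPiAlgebra ℂ (Fin d) ℂ).compLinearMap η)
              (PiTensorProduct.map
                (Function.update (fun j => (LinearMap.id : V j →ₗ[ℂ] V j)) k (X k))
                (PiTensorProduct.map (fun i => (V' i).subtype) T'))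
            = PiTensorProduct.lift
                ((MultilinearMap.mkPiAlgebra ℂ (Fin d) ℂ).compLinearMap
                  (fun j => ((η j).comp
                    ((Function.update (fun j => (LinearMap.id : V j →ₗ[ℂ] V j)) k (X k)) j)).comp
                    (V' j).subtype)) T' := by
          intro k
          have hcomp : ((PiTensorProduct.lift
              ((MultilinearMap.mkPiAlgebra ℂ (Fin d) ℂ).compLinearMap η)).comp
              (PiTensorProduct.map
                (Function.update (fun j => (LinearMap.id : V j →ₗ[ℂ] V j)) k (X k)))).comp
              (PiTensorProduct.map (fun i => (V' i).subtype))
              = PiTensorProduct.lift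
                ((MultilinearMap.mkPiAlgebra ℂ (Fin d) ℂ).compLinearMap
                  (fun j => ((η j).comp
                    ((Function.update (fun j => (LinearMap.id : V j →ₗ[ℂ] V j)) k (X k)) j)).comp
                    (V' j).subtype)) := by
            rw [PiTensorProduct.lift_comp_map, PiTensorProduct.lift_comp_map,
              compLinearMap_compLinearMap, compLinearMap_compLinearMap]
            simp only [LinearMap.comp_assoc]
          exact LinearMap.congr_fun hcomp T'
        simp only [hterm] at h0
        -- terms k ≠ i vanish; term k = i is contraction with χ
        rw [Finset.sum_eq_single_of_mem i (Finset.mem_univ i)] at h0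
        · have hfs : (fun j => ((η j).comp
              ((Function.update (fun j => (LinearMap.id : V j →ₗ[ℂ] V j)) i (X i)) j)).comp
              (V' j).subtype) = χ := by
            funext j
            ext v
            by_cases hj : j = i
            · subst hj
              simp [Function.update_self, hη, hχ]
            · have hpv : p j (v : V j) = v := LinearMap.congr_fun (hp j) v
              simp [Function.update_of_ne hj, hη, hpv]
          rw [hfs] at h0
          exact h0
        · intro k _ hk
          have : ((MultilinearMap.mkPiAlgebra ℂ (Fin d) ℂ).compLinearMap
              (fun j => ((η j).comp
                ((Function.update (fun j => (LinearMap.id : V j →ₗ[ℂ] V j)) k (X k)) j)).comp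
                (V' j).subtype)) = 0 := by
            ext v
            simp only [MultilinearMap.compLinearMap_apply, MultilinearMap.mkPiAlgebra_apply,
              MultilinearMap.zero_apply]
            apply Finset.prod_eq_zero (Finset.mem_univ i)
            have hik : i ≠ k := fun hik => hk hik.symm
            simp [Function.update_of_ne hik, hη, Function.update_self, hφ _ (v i).2]
          rw [this, map_zero, LinearMap.zero_apply]
      have := LinearMap.congr_fun hψ ⟨w, hw⟩
      simpa using this
    -- Step 2: restrictions
    refine ⟨fun i => (X i).restrict (fun x hx => hpres i x hx), fun i w => rfl, ?_⟩
    have hnat := leib_natural (fun i => (V' i).subtype) X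
      (fun i => (X i).restrict (fun x hx => hpres i x hx)) (fun i => by ext v; rfl) T'
    rw [h] at hnat
    -- injectivity of map subtype
    have hinj : Function.Injective (PiTensorProduct.map (R := ℂ) (fun i => (V' i).subtype)) := by
      have : (PiTensorProduct.map (fun j => p j)).comp
          (PiTensorProduct.map (R := ℂ) (fun i => (V' i).subtype)) = LinearMap.id := by
        rw [← PiTensorProduct.map_comp]
        rw [show (fun j => (p j).comp (V' j).subtype) = fun j => (LinearMap.id : (V' j : Type _) →ₗ[ℂ] V' j) from funext hp]
        exact PiTensorProduct.map_id
      intro a b hab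
      have h2 := congrArg (PiTensorProduct.map (fun j => p j)) hab
      rw [← LinearMap.comp_apply, ← LinearMap.comp_apply, this] at h2
      simpa using h2
    exact hinj (by rw [hnat, map_zero])
  · rintro ⟨X', hX', hX'0⟩
    have hnat := leib_natural (fun i => (V' i).subtype) X X'
      (fun i => by ext v; exact hX' i v) T'
    rw [hX'0, map_zero] at hnat
    exact hnat.symm
end

section
/- Let V_1,…,V_d be finite-dimensional complex vector spaces, T ∈ V_1⊗⋯⊗V_d, and I ⊆ {1,…,d}. Let F_T : ⨂_{j∉I} V_j* → ⨂_{i∈I} V_i denote the flattening map of T associated to I. Then for any tuple (X_i)_{i∈I} of endomorphisms X_i ∈ End(V_i), the element Σ_{i∈I} (Id⊗⋯⊗X_i⊗⋯⊗Id)(T) of V_1⊗⋯⊗V_d is zero if and only if for every S in the image of F_T one has Σ_{i∈I} (Id⊗⋯⊗X_i⊗⋯⊗Id)(S) = 0 in ⨂_{i∈I} V_i. (In the notation of annihilators: ann(T) ∩ (⊕_{i∈I} End(V_i)) = ⋂_{S ∈ Im F_T} ann(S).) -/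
open scoped BigOperators

/-- Gluing of partial index assignments on `I` and on its complement. -/
def glue {d : ℕ} {n : Fin d → ℕ} (I : Finset (Fin d))
    (βI : ∀ i : {v : Fin d // v ∈ I}, Fin (n i.1))
    (κ : ∀ j : {v : Fin d // v ∉ I}, Fin (n j.1)) : ∀ v : Fin d, Fin (n v) :=
  fun v => if h : v ∈ I then βI ⟨v, h⟩ else κ ⟨v, h⟩

/-- The flattening map of `T` associated to `I ⊆ {1,…,d}`, in coordinates: it takes a
functional `c` on `⨂_{j∉I} V_j*` (given by its coordinates) to the tensor
`F_T(c) ∈ ⨂_{i∈I} V_i`. -/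
noncomputable def flat {d : ℕ} {n : Fin d → ℕ} (I : Finset (Fin d))
    (T : (∀ v : Fin d, Fin (n v)) → ℂ)
    (c : (∀ j : {v : Fin d // v ∉ I}, Fin (n j.1)) → ℂ) :
    (∀ i : {v : Fin d // v ∈ I}, Fin (n i.1)) → ℂ :=
  fun βI => ∑ κ : (∀ j : {v : Fin d // v ∉ I}, Fin (n j.1)), c κ * T (glue I βI κ)

lemma glue_apply_mem {d : ℕ} {n : Fin d → ℕ} (I : Finset (Fin d))
    (βI : ∀ i : {v : Fin d // v ∈ I}, Fin (n i.1))
    (κ : ∀ j : {v : Fin d // v ∉ I}, Fin (n j.1)) (i : {v : Fin d // v ∈ I}) :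
    glue I βI κ i.1 = βI i := by
  simp [glue, i.2]

lemma glue_update {d : ℕ} {n : Fin d → ℕ} (I : Finset (Fin d))
    (βI : ∀ i : {v : Fin d // v ∈ I}, Fin (n i.1))
    (κ : ∀ j : {v : Fin d // v ∉ I}, Fin (n j.1))
    (i : {v : Fin d // v ∈ I}) (γ : Fin (n i.1)) :
    glue I (Function.update βI i γ) κ = Function.update (glue I βI κ) i.1 γ := by
  funext v
  by_cases hv : v = i.1
  · subst hv
    simp [glue, i.2]
  · by_cases h : v ∈ I
    · have hne : (⟨v, h⟩ : {v : Fin d // v ∈ I}) ≠ i := fun he => hv (congrArg Subtype.val he)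
      simp [glue, h, Function.update_of_ne hne, Function.update_of_ne hv]
    · simp [glue, h, Function.update_of_ne hv]

lemma glue_restrict {d : ℕ} {n : Fin d → ℕ} (I : Finset (Fin d))
    (β : ∀ v : Fin d, Fin (n v)) :
    glue I (fun i : {v : Fin d // v ∈ I} => β i.1) (fun j : {v : Fin d // v ∉ I} => β j.1) = β := by
  funext v
  by_cases h : v ∈ I <;> simp [glue, h]

/-- Lemma: for a tuple `(X_i)_{i∈I}` of endomorphisms acting on the factors in `I`,
`Σ_{i∈I} (Id⊗⋯⊗X_i⊗⋯⊗Id)(T) = 0` if and only if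
`Σ_{i∈I} (Id⊗⋯⊗X_i⊗⋯⊗Id)(S) = 0` for every `S` in the image of the flattening map
`F_T : ⨂_{j∉I} V_j* → ⨂_{i∈I} V_i`. -/
theorem ann_inter_partial_eq_iInf_ann_flattening {d : ℕ} (n : Fin d → ℕ)
    (T : (∀ v : Fin d, Fin (n v)) → ℂ) (I : Finset (Fin d))
    (X : ∀ i : {v : Fin d // v ∈ I}, Fin (n i.1) → Fin (n i.1) → ℂ) :
    (∀ β : ∀ v : Fin d, Fin (n v),
      (∑ i : {v : Fin d // v ∈ I}, ∑ γ : Fin (n i.1),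
        X i (β i.1) γ * T (Function.update β i.1 γ)) = 0)
    ↔ (∀ c : (∀ j : {v : Fin d // v ∉ I}, Fin (n j.1)) → ℂ,
        ∀ βI : ∀ i : {v : Fin d // v ∈ I}, Fin (n i.1),
          (∑ i : {v : Fin d // v ∈ I}, ∑ γ : Fin (n i.1),
            X i (βI i) γ * flat I T c (Function.update βI i γ)) = 0) := by
  constructor
  · intro h c βI
    have step : (∑ i : {v : Fin d // v ∈ I}, ∑ γ : Fin (n i.1),
        X i (βI i) γ * flat I T c (Function.update βI i γ))
      = ∑ κ : (∀ j : {v : Fin d // v ∉ I}, Fin (n j.1)),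
          c κ * (∑ i : {v : Fin d // v ∈ I}, ∑ γ : Fin (n i.1),
            X i ((glue I βI κ) i.1) γ * T (Function.update (glue I βI κ) i.1 γ)) := by
      simp only [flat, Finset.mul_sum, glue_update, glue_apply_mem]
      conv_rhs => rw [Finset.sum_comm]
      refine Finset.sum_congr rfl fun i _ => ?_
      rw [Finset.sum_comm]
      exact Finset.sum_congr rfl fun κ _ => Finset.sum_congr rfl fun γ _ => by ring
    rw [step]
    exact Finset.sum_eq_zero fun κ _ => by rw [h (glue I βI κ), mul_zero]
  · intro h β
    have h2 := h (fun κ => if κ = (fun j : {v : Fin d // v ∉ I} => β j.1) then 1 else 0)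
      (fun i : {v : Fin d // v ∈ I} => β i.1)
    simp only [flat, ite_mul, one_mul, zero_mul, Finset.sum_ite_eq', Finset.mem_univ,
      if_true, glue_update, glue_restrict] at h2
    exact h2
end

section
/- Let d ≥ 3, m ≥ 1 be integers and let n_1,…,n_d ≥ 1 be integers with n_j ≥ 2 for at least one j (indices taken modulo d). Then the action of the gauge group of the cycle graph with constant bond dimension m on the parametrizing space of matrix product states is generically stable: there exist linear maps X_j : M_m(ℂ) → ℂ^{n_j} for j ∈ ℤ/d such that the projective stabilizer H̃ = { (g_1,…,g_d) ∈ GL_m(ℂ)^d : there exist μ_1,…,μ_d ∈ ℂ* with μ_1⋯μ_d = 1 such that for all j ∈ ℤ/d and all M ∈ M_m(ℂ), X_j(g_j · M · g_{j+1}⁻¹) = μ_j · X_j(M) } has finite image in PGL_m(ℂ)^d; equivalently, H̃ is a finite union of cosets of the subgroup { (λ·I,…,λ·I) : λ ∈ ℂ* } of GL_m(ℂ)^d. -/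
open scoped BigOperators
open Fin.NatCast

private lemma trace_ext' {m : ℕ} (C C' : Matrix (Fin m) (Fin m) ℂ)
    (h : ∀ M, (C * M).trace = (C' * M).trace) : C = C' := by
  ext i j
  have := h (Matrix.single j i 1)
  simpa [Matrix.trace, Matrix.diag, Matrix.mul_apply, Matrix.single,
    mul_ite, ite_and, Finset.sum_ite_eq] using this

/-- Proposition (generic stability of the gauge action for matrix product states on the
cycle): for `d ≥ 3`, constant bond dimension `m`, and local dimensions `n_j` with
`n_j ≥ 2` for at least one `j`, there exists a tuple of linear maps
`X_j : M_m(ℂ) → ℂ^{n_j}` whose lifted projective stabilizer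
`H̃ = { (g_j) ∈ GL_m(ℂ)^d : ∃ μ_j ∈ ℂ*, ∏ μ_j = 1, X_j(g_j M g_{j+1}⁻¹) = μ_j X_j(M) }`
has finite image in `PGL_m(ℂ)^d`, i.e. is finite modulo componentwise scalars. -/
theorem MPS_gauge_generically_stable (d m : ℕ) [NeZero d] (hd : 3 ≤ d) (hm : 1 ≤ m)
    (n : Fin d → ℕ) (hn : ∀ j, 1 ≤ n j) (hn2 : ∃ j, 2 ≤ n j) :
    ∃ X : ∀ j : Fin d, Matrix (Fin m) (Fin m) ℂ →ₗ[ℂ] (Fin (n j) → ℂ),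
      ∃ F : Finset (Fin d → Matrix (Fin m) (Fin m) ℂ),
        ∀ g : Fin d → Matrix (Fin m) (Fin m) ℂ,
          ((∀ j, IsUnit (g j)) ∧
            ∃ μ : Fin d → ℂ, (∀ j, μ j ≠ 0) ∧ (∏ j, μ j) = 1 ∧
              ∀ (j : Fin d) (M : Matrix (Fin m) (Fin m) ℂ),
                X j (g j * M * (g (j + 1))⁻¹) = μ j • X j M) →
          ∃ h ∈ F, ∃ c : Fin d → ℂ, (∀ j, c j ≠ 0) ∧ ∀ j, g j = c j • h j := by
  obtain ⟨j₀, hj₀⟩ := hn2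
  haveI : NeZero m := ⟨by omega⟩
  set A : Matrix (Fin m) (Fin m) ℂ := Matrix.diagonal (fun i => (i : ℂ) + 1) with hA
  set B : Matrix (Fin m) (Fin m) ℂ := Matrix.of (fun _ _ => (1 : ℂ)) with hB
  set tr : Matrix (Fin m) (Fin m) ℂ →ₗ[ℂ] ℂ := Matrix.traceLinearMap (Fin m) ℂ ℂ with htr
  refine ⟨fun j => LinearMap.pi (fun i : Fin (n j) =>
      if j = j₀ then
        (if (i : ℕ) = 0 then tr.comp (LinearMap.mulLeft ℂ A)
         else if (i : ℕ) = 1 then tr.comp (LinearMap.mulLeft ℂ B) else 0)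
      else (if (i : ℕ) = 0 then tr else 0)),
    {fun _ => (1 : Matrix (Fin m) (Fin m) ℂ)}, ?_⟩
  rintro g ⟨hg, μ, hμ0, -, hX⟩
  have hgd : ∀ j, IsUnit (g j).det := fun j => (Matrix.isUnit_iff_isUnit_det _).mp (hg j)
  -- Step 1: at sites j ≠ j₀ the trace condition forces g j = μ j • g (j+1)
  have scal : ∀ j : Fin d, j ≠ j₀ → g j = μ j • g (j + 1) := by
    intro j hj
    have key : ∀ M, (((g (j+1))⁻¹ * g j) * M).trace
        = ((μ j • (1 : Matrix (Fin m) (Fin m) ℂ)) * M).trace := by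
      intro M
      have h1 := congrFun (hX j M) ⟨0, hn j⟩
      simp only [LinearMap.pi_apply, if_neg hj, Pi.smul_apply, if_pos rfl] at h1
      calc (((g (j+1))⁻¹ * g j) * M).trace
          = ((g (j+1))⁻¹ * (g j * M)).trace := by rw [Matrix.mul_assoc]
        _ = ((g j * M) * (g (j+1))⁻¹).trace := (Matrix.trace_mul_comm _ _).symm
        _ = μ j * M.trace := h1
        _ = ((μ j • (1 : Matrix (Fin m) (Fin m) ℂ)) * M).trace := by
            rw [smul_mul_assoc, one_mul, Matrix.trace_smul, smul_eq_mul]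
    have h2 := trace_ext' _ _ key
    calc g j = (g (j+1) * (g (j+1))⁻¹) * g j := by
          rw [Matrix.mul_nonsing_inv _ (hgd (j+1)), one_mul]
      _ = g (j+1) * ((g (j+1))⁻¹ * g j) := by rw [Matrix.mul_assoc]
      _ = g (j+1) * (μ j • (1 : Matrix (Fin m) (Fin m) ℂ)) := by rw [h2]
      _ = μ j • g (j+1) := by rw [mul_smul_comm, mul_one]
  -- Step 2: at j₀ the two conditions
  have key₀ : ∀ (C : Matrix (Fin m) (Fin m) ℂ),
      (∀ M, (C * (g j₀ * M * (g (j₀+1))⁻¹)).trace = μ j₀ * (C * M).trace) →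
      (g (j₀+1))⁻¹ * C * g j₀ = μ j₀ • C := by
    intro C hC
    apply trace_ext'
    intro M
    calc (((g (j₀+1))⁻¹ * C * g j₀) * M).trace
        = ((g (j₀+1))⁻¹ * (C * (g j₀ * M))).trace := by
          simp only [Matrix.mul_assoc]
      _ = ((C * (g j₀ * M)) * (g (j₀+1))⁻¹).trace := (Matrix.trace_mul_comm _ _).symm
      _ = (C * (g j₀ * M * (g (j₀+1))⁻¹)).trace := by simp only [Matrix.mul_assoc]
      _ = μ j₀ * (C * M).trace := hC M
      _ = ((μ j₀ • C) * M).trace := by rw [smul_mul_assoc, Matrix.trace_smul, smul_eq_mul]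
  have hA' : (g (j₀+1))⁻¹ * A * g j₀ = μ j₀ • A := by
    apply key₀
    intro M
    have h1 := congrFun (hX j₀ M) ⟨0, by omega⟩
    simpa only [LinearMap.pi_apply, if_pos rfl, if_true, Pi.smul_apply, LinearMap.comp_apply,
      LinearMap.mulLeft_apply, htr, Matrix.traceLinearMap_apply, smul_eq_mul] using h1
  have hB' : (g (j₀+1))⁻¹ * B * g j₀ = μ j₀ • B := by
    apply key₀
    intro M
    have h1 := congrFun (hX j₀ M) ⟨1, hj₀⟩
    have : ((⟨1, hj₀⟩ : Fin (n j₀)) : ℕ) = 1 := rfl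
    simp only [LinearMap.pi_apply, if_pos rfl, this, Pi.smul_apply] at h1
    simpa only [if_neg one_ne_zero, if_pos rfl, if_true, LinearMap.comp_apply,
      LinearMap.mulLeft_apply, htr, Matrix.traceLinearMap_apply, smul_eq_mul] using h1
  -- Step 3: the chain around the cycle
  have chain : ∀ k : ℕ, k + 1 ≤ d → ∃ ν : ℂ, ν ≠ 0 ∧
      g (j₀ + 1) = ν • g (j₀ + 1 + (k : Fin d)) := by
    intro k
    induction k with
    | zero => exact fun _ => ⟨1, one_ne_zero, by simp⟩
    | succ k ih =>
      intro hk
      obtain ⟨ν, hν, heq⟩ := ih (by omega)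
      have hjne : j₀ + 1 + (k : Fin d) ≠ j₀ := by
        intro hcon
        have h1 : ((1 + k : ℕ) : Fin d) = 0 := by
          push_cast
          have := hcon
          rw [add_assoc] at this
          have h2 : (1 : Fin d) + (k : Fin d) = 0 := by
            have := add_left_cancel (a := j₀) (b := 1 + (k : Fin d)) (c := 0)
            apply this
            simpa [add_assoc] using hcon
          exact h2
        rw [Fin.natCast_eq_zero] at h1
        have := Nat.le_of_dvd (by omega) h1
        omega
      have hstep := scal _ hjne
      refine ⟨ν * μ (j₀ + 1 + (k : Fin d)), mul_ne_zero hν (hμ0 _), ?_⟩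
      have hidx : j₀ + 1 + (k : Fin d) + 1 = j₀ + 1 + ((k + 1 : ℕ) : Fin d) := by
        push_cast [Nat.cast_add]
        abel
      rw [heq, hstep, hidx, smul_smul]
  -- close the cycle : g (j₀+1) = ν • g j₀
  obtain ⟨ν, hν, hg1⟩ := chain (d - 1) (by omega)
  have hclose : j₀ + 1 + ((d - 1 : ℕ) : Fin d) = j₀ := by
    have : (1 : Fin d) + ((d - 1 : ℕ) : Fin d) = ((d : ℕ) : Fin d) := by
      have : 1 + (d - 1) = d := by omega
      rw [← Nat.cast_one, ← Nat.cast_add, this]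
    rw [add_assoc, this, Fin.natCast_self, add_zero]
  rw [hclose] at hg1
  -- Step 4: derive commutation relations with factor α
  set α : ℂ := μ j₀ * ν with hα
  have comm : ∀ C : Matrix (Fin m) (Fin m) ℂ,
      (g (j₀+1))⁻¹ * C * g j₀ = μ j₀ • C → C * g j₀ = α • (g j₀ * C) := by
    intro C hC
    calc C * g j₀ = (g (j₀+1) * (g (j₀+1))⁻¹) * (C * g j₀) := by
          rw [Matrix.mul_nonsing_inv _ (hgd (j₀+1)), one_mul]
      _ = g (j₀+1) * ((g (j₀+1))⁻¹ * C * g j₀) := by simp only [Matrix.mul_assoc]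
      _ = g (j₀+1) * (μ j₀ • C) := by rw [hC]
      _ = μ j₀ • (g (j₀+1) * C) := by rw [mul_smul_comm]
      _ = μ j₀ • ((ν • g j₀) * C) := by rw [← hg1]
      _ = α • (g j₀ * C) := by rw [smul_mul_assoc, smul_smul, hα]
  have hAc := comm A hA'
  have hBc := comm B hB'
  -- Step 5: α = 1 via the trace of A
  have htrA : A.trace ≠ 0 := by
    have h1 : A.trace = ((∑ i : Fin m, (i + 1) : ℕ) : ℂ) := by
      simp [hA, Matrix.trace_diagonal]
    rw [h1, Ne, Nat.cast_eq_zero]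
    have : 0 < ∑ i : Fin m, ((i : ℕ) + 1) := by
      apply Finset.sum_pos (fun i _ => by omega)
      exact Finset.univ_nonempty
    omega
  have hα1 : α = 1 := by
    have h1 : (g j₀)⁻¹ * (A * g j₀) = α • A := by
      rw [hAc, mul_smul_comm, ← Matrix.mul_assoc, Matrix.nonsing_inv_mul _ (hgd j₀), one_mul]
    have h2 : ((g j₀)⁻¹ * (A * g j₀)).trace = A.trace := by
      rw [Matrix.trace_mul_comm, Matrix.mul_assoc, Matrix.mul_nonsing_inv _ (hgd j₀), Matrix.mul_one]
    rw [h1, Matrix.trace_smul, smul_eq_mul] at h2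
    exact mul_right_cancel₀ htrA (h2.trans (one_mul A.trace).symm)
  rw [hα1, one_smul] at hAc hBc
  -- Step 6: g j₀ is diagonal
  have hdiag : ∀ i j : Fin m, i ≠ j → g j₀ i j = 0 := by
    intro i j hij
    have h1 : (A * g j₀) i j = (g j₀ * A) i j := by rw [hAc]
    rw [hA, Matrix.diagonal_mul, Matrix.mul_diagonal] at h1
    have hcast : ((i : ℕ) : ℂ) ≠ ((j : ℕ) : ℂ) := by
      rw [Ne, Nat.cast_inj]
      exact fun h => hij (Fin.ext h)
    have : (((i : ℕ) : ℂ) + 1 - (((j : ℕ) : ℂ) + 1)) * g j₀ i j = 0 := by ring_nf; linear_combination h1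
    rcases mul_eq_zero.mp this with h | h
    · exact absurd (by linear_combination h) hcast
    · exact h
  -- Step 7: all diagonal entries equal
  have hconst : ∀ i j : Fin m, g j₀ i i = g j₀ j j := by
    intro i j
    have h1 : (B * g j₀) i j = (g j₀ * B) i j := by rw [hBc]
    rw [Matrix.mul_apply, Matrix.mul_apply] at h1
    have hL : ∑ k, B i k * g j₀ k j = g j₀ j j := by
      rw [Finset.sum_eq_single j]
      · simp [hB]
      · intro k _ hk; rw [hdiag k j hk, mul_zero]
      · simp
    have hR : ∑ k, g j₀ i k * B k j = g j₀ i i := by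
      rw [Finset.sum_eq_single i]
      · simp [hB]
      · intro k _ hk; rw [hdiag i k (Ne.symm hk), zero_mul]
      · simp
    rw [hL, hR] at h1
    exact h1.symm
  -- Step 8: g j₀ is a nonzero scalar
  set c₀ : ℂ := g j₀ 0 0 with hc₀
  have hgj₀ : g j₀ = c₀ • (1 : Matrix (Fin m) (Fin m) ℂ) := by
    ext i j
    by_cases hij : i = j
    · subst hij
      rw [hconst i 0]
      simp [Matrix.one_apply, hc₀]
    · rw [hdiag i j hij]
      simp [Matrix.one_apply, hij]
  have hc₀0 : c₀ ≠ 0 := by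
    intro h0
    rw [h0, zero_smul] at hgj₀
    have := hgd j₀
    rw [hgj₀, Matrix.det_zero] at this
    exact zero_ne_one (isUnit_zero_iff.mp this)
  -- Step 9: every g j is a nonzero scalar
  have hall : ∀ j : Fin d, ∃ cj : ℂ, cj ≠ 0 ∧ g j = cj • (1 : Matrix (Fin m) (Fin m) ℂ) := by
    intro j
    set t : Fin d := j - (j₀ + 1) with ht
    obtain ⟨νk, hνk, heqk⟩ := chain (t : ℕ) (by have := t.isLt; omega)
    have hidx : j₀ + 1 + (((t : ℕ) : Fin d)) = j := by
      rw [Fin.cast_val_eq_self, ht]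
      abel
    rw [hidx, hg1, hgj₀] at heqk
    -- heqk : (ν * c₀) • 1 = νk • g j   (after rewriting)
    have : g j = (νk⁻¹ * (ν * c₀)) • (1 : Matrix (Fin m) (Fin m) ℂ) := by
      have h2 : νk • g j = (ν * c₀) • (1 : Matrix (Fin m) (Fin m) ℂ) := by
        rw [← heqk, smul_smul]
      calc g j = νk⁻¹ • (νk • g j) := by rw [smul_smul, inv_mul_cancel₀ hνk, one_smul]
        _ = νk⁻¹ • ((ν * c₀) • (1 : Matrix (Fin m) (Fin m) ℂ)) := by rw [h2]
        _ = (νk⁻¹ * (ν * c₀)) • (1 : Matrix (Fin m) (Fin m) ℂ) := by rw [smul_smul]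
    exact ⟨_, mul_ne_zero (inv_ne_zero hνk) (mul_ne_zero hν hc₀0), this⟩
  choose c hc0 hc1 using hall
  exact ⟨fun _ => 1, Finset.mem_singleton_self _, c, hc0, fun j => hc1 j⟩
end
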